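/- arXiv:2006.04398 — 6 statements merged into one kernel-verified Lean document; each statement's English description precedes it below -/
import Mathlib

section
/- Let G be a group with center Z(G), and let G_* be a strongly central filtration on G (i.e. G = G_1 ⊇ G_2 ⊇ ⋯ are subgroups with [G_i, G_j] ⊆ G_{i+j} for all i, j ≥ 1, where [g,x] = gxg⁻¹x⁻¹). Then the following two conditions are equivalent: (1) for every j ≥ 1 and every g ∈ G, one has ((for all i ≥ 1 and all x ∈ G_i, [g,x] ∈ G_{i+j}) if and only if there exists z ∈ Z(G) with g·z ∈ G_j); (2) for every i ≥ 1 and every g ∈ G_i such that for all k ≥ 1 and all x ∈ G_k one has [g,x] ∈ G_{i+k+1}, there exists z ∈ Z(G) ∩ G_i with g⁻¹·z ∈ G_{i+1}. -/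
open scoped commutatorElement

/-- Multiplying by a central element does not change commutators. -/
lemma commutator_mul_center {G : Type*} [Group G] (z : G) (hz : z ∈ Subgroup.center G)
    (g x : G) : ⁅g * z, x⁆ = ⁅g, x⁆ := by
  have h : z * x = x * z := (Subgroup.mem_center_iff.mp hz x).symm
  have h2 : z * x * z⁻¹ = x := by rw [h, mul_inv_cancel_right]
  calc ⁅g * z, x⁆ = g * (z * x * z⁻¹) * g⁻¹ * x⁻¹ := by
        simp [commutatorElement_def, mul_inv_rev, mul_assoc]
    _ = ⁅g, x⁆ := by rw [h2, commutatorElement_def]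

/-- Theorem 2.1. Let `G` be a group and `Gf` a strongly central filtration
on `G` (indexed so that `Gf 1 = G`, `Gf` is nested for indices `≥ 1`, and
`[Gf i, Gf j] ⊆ Gf (i+j)`).  Then the image of `Gf` in `Inn(G)` coincides with
`Inn(G) ∩ 𝒜_*(Gf)` (condition (1)) if and only if every central element of `Lie(Gf)` is the
class of a central element of `G` (condition (2)). -/
theorem andreadakis_for_inner_general {G : Type*} [Group G] (Gf : ℕ → Subgroup G)
    (h1 : Gf 1 = ⊤)
    (hdesc : ∀ i, 1 ≤ i → Gf (i + 1) ≤ Gf i)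
    (hsc : ∀ i j, 1 ≤ i → 1 ≤ j → ∀ g ∈ Gf i, ∀ x ∈ Gf j, ⁅g, x⁆ ∈ Gf (i + j)) :
    (∀ j, 1 ≤ j → ∀ g : G,
        ((∀ i, 1 ≤ i → ∀ x ∈ Gf i, ⁅g, x⁆ ∈ Gf (i + j)) ↔
          ∃ z ∈ Subgroup.center G, g * z ∈ Gf j)) ↔
    (∀ i, 1 ≤ i → ∀ g ∈ Gf i,
        (∀ k, 1 ≤ k → ∀ x ∈ Gf k, ⁅g, x⁆ ∈ Gf (i + k + 1)) →
        ∃ z ∈ Subgroup.center G ⊓ Gf i, g⁻¹ * z ∈ Gf (i + 1)) := by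
  have mono : ∀ a b : ℕ, 1 ≤ a → a ≤ b → Gf b ≤ Gf a := by
    intro a b ha hab
    induction b with
    | zero => omega
    | succ n ih =>
      rcases eq_or_lt_of_le hab with h | h
      · rw [h]
      · exact (hdesc n (by omega)).trans (ih (by omega))
  constructor
  · -- (1) → (2)
    intro H i hi g hg hcom
    obtain ⟨z, hz, hgz⟩ := (H (i + 1) (by omega) g).mp (by
      intro k hk x hx
      have := hcom k hk x hx
      have e : k + (i + 1) = i + k + 1 := by omega
      rwa [e])
    refine ⟨z⁻¹, Subgroup.mem_inf.mpr ⟨inv_mem hz, ?_⟩, ?_⟩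
    · have : z = g⁻¹ * (g * z) := by group
      have hzmem : z ∈ Gf i := by
        rw [this]
        exact mul_mem (inv_mem hg) (hdesc i hi hgz)
      exact inv_mem hzmem
    · have : g⁻¹ * z⁻¹ = (g * z)⁻¹ := by
        rw [mul_inv_rev]
        exact (Subgroup.mem_center_iff.mp (inv_mem hz) g⁻¹)
      rw [this]
      exact inv_mem hgz
  · -- (2) → (1)
    intro H j hj g
    constructor
    · intro hA
      have key : ∀ m, 1 ≤ m → m ≤ j → ∃ z ∈ Subgroup.center G, g * z ∈ Gf m := by
        intro m hm
        induction m with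
        | zero => omega
        | succ n ih =>
          intro hle
          by_cases hn : n = 0
          · subst hn
            exact ⟨1, Subgroup.one_mem _, by simp [h1]⟩
          · have hn1 : 1 ≤ n := by omega
            obtain ⟨z, hz, hgz⟩ := ih hn1 (by omega)
            have hc : ∀ k, 1 ≤ k → ∀ x ∈ Gf k, ⁅g * z, x⁆ ∈ Gf (n + k + 1) := by
              intro k hk x hx
              rw [commutator_mul_center z hz g x]
              have := hA k hk x hx
              exact mono (n + k + 1) (k + j) (by omega) (by omega) this
            obtain ⟨z', hz', hz'2⟩ := H n hn1 (g * z) hgz hc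
            obtain ⟨hz'c, hz'i⟩ := Subgroup.mem_inf.mp hz'
            refine ⟨z * z'⁻¹, mul_mem hz (inv_mem hz'c), ?_⟩
            have hinv : z'⁻¹ * (g * z) ∈ Gf (n + 1) := by
              have := inv_mem hz'2
              rwa [mul_inv_rev, inv_inv] at this
            have hcen : z'⁻¹ * (g * z) = g * (z * z'⁻¹) := by
              rw [← Subgroup.mem_center_iff.mp (inv_mem hz'c) (g * z), mul_assoc]
            rwa [hcen] at hinv
      exact key j hj le_rfl
    · rintro ⟨z, hz, hgz⟩ i hi x hx
      rw [← commutator_mul_center z hz g x]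
      have := hsc j i hj hi (g * z) hgz x hx
      have e : j + i = i + j := by omega
      rwa [e] at this
end

section
/- Let G be a group with center Z(G), and let Γ_1(G) = G, Γ_{k+1}(G) = [G, Γ_k(G)] be its lower central series, where [g,x] = gxg⁻¹x⁻¹. Then the following two conditions are equivalent: (1) for every j ≥ 1 and every g ∈ G, one has ((for all i ≥ 1 and all x ∈ Γ_i(G), [g,x] ∈ Γ_{i+j}(G)) if and only if there exists z ∈ Z(G) with g·z ∈ Γ_j(G)); (2) for every i ≥ 1 and every g ∈ Γ_i(G) such that for all k ≥ 1 and all x ∈ Γ_k(G) one has [g,x] ∈ Γ_{i+k+1}(G), there exists z ∈ Z(G) ∩ Γ_i(G) with g⁻¹·z ∈ Γ_{i+1}(G). -/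
open Subgroup

open scoped commutatorElement

private lemma lcs_succ_eq {G : Type*} [Group G] (n : ℕ) :
    (⊤ : Subgroup G).lowerCentralSeries (n + 1) = ⁅(⊤ : Subgroup G).lowerCentralSeries n, (⊤ : Subgroup G)⁆ := rfl

private lemma map_lcs_eq {G H : Type*} [Group G] [Group H] (f : G →* H)
    (hf : Function.Surjective f) (n : ℕ) :
    ((⊤ : Subgroup G).lowerCentralSeries n).map f = (⊤ : Subgroup H).lowerCentralSeries n := by
  induction n with
  | zero => simpa using Subgroup.map_top_of_surjective f hf
  | succ n ih => rw [lcs_succ_eq, lcs_succ_eq, Subgroup.map_commutator, ih,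
      Subgroup.map_top_of_surjective f hf]

-- `⁅Γ_{m+1}, Γ_{n+1}⁆ ≤ Γ_{m+n+2}` in mathlib indexing.
universe u in
set_option maxHeartbeats 2000000 in
private lemma lcs_comm_le (n : ℕ) : ∀ {G : Type u} [Group G] (m : ℕ),
    ⁅(⊤ : Subgroup G).lowerCentralSeries m, (⊤ : Subgroup G).lowerCentralSeries n⁆ ≤ (⊤ : Subgroup G).lowerCentralSeries (m + n + 1) := by
  induction n with
  | zero =>
      intro G _ m
      rw [Subgroup.lowerCentralSeries_zero, ← lcs_succ_eq]
  | succ n IH =>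
      intro G _ m
      set N := (⊤ : Subgroup G).lowerCentralSeries (m + (n + 1) + 1) with hN
      let π := QuotientGroup.mk' N
      have hπ : Function.Surjective π := QuotientGroup.mk'_surjective N
      have hker : π.ker = N := QuotientGroup.ker_mk' N
      have hmapN : ((⊤ : Subgroup (G ⧸ N)).lowerCentralSeries) (m + n + 2) = ⊥ := by
        rw [← map_lcs_eq π hπ, Subgroup.map_eq_bot_iff, hker, hN,
          show m + (n + 1) + 1 = m + n + 2 by ring]
      -- three subgroups lemma in the quotient
      have h1 : ⁅⁅(⊤ : Subgroup (G ⧸ N)).lowerCentralSeries n, (⊤ : Subgroup (G ⧸ N)).lowerCentralSeries m⁆,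
          (⊤ : Subgroup (G ⧸ N))⁆ = ⊥ := by
        rw [eq_bot_iff, ← hmapN]
        calc ⁅⁅(⊤ : Subgroup (G ⧸ N)).lowerCentralSeries n, (⊤ : Subgroup (G ⧸ N)).lowerCentralSeries m⁆,
              (⊤ : Subgroup (G ⧸ N))⁆
            = ⁅⁅(⊤ : Subgroup (G ⧸ N)).lowerCentralSeries m, (⊤ : Subgroup (G ⧸ N)).lowerCentralSeries n⁆,
              (⊤ : Subgroup (G ⧸ N))⁆ := by
              rw [Subgroup.commutator_comm ((⊤ : Subgroup (G ⧸ N)).lowerCentralSeries n)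
                ((⊤ : Subgroup (G ⧸ N)).lowerCentralSeries m)]
          _ ≤ ⁅(⊤ : Subgroup (G ⧸ N)).lowerCentralSeries (m + n + 1), (⊤ : Subgroup (G ⧸ N))⁆ :=
              Subgroup.commutator_mono (IH m) le_rfl
          _ = (⊤ : Subgroup (G ⧸ N)).lowerCentralSeries (m + n + 2) := (lcs_succ_eq _).symm
      have h2 : ⁅⁅(⊤ : Subgroup (G ⧸ N)).lowerCentralSeries m, (⊤ : Subgroup (G ⧸ N))⁆,
          (⊤ : Subgroup (G ⧸ N)).lowerCentralSeries n⁆ = ⊥ := by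
        rw [eq_bot_iff, ← hmapN, ← lcs_succ_eq]
        calc ⁅(⊤ : Subgroup (G ⧸ N)).lowerCentralSeries (m + 1), (⊤ : Subgroup (G ⧸ N)).lowerCentralSeries n⁆
            ≤ (⊤ : Subgroup (G ⧸ N)).lowerCentralSeries (m + 1 + n + 1) := IH (m + 1)
          _ ≤ (⊤ : Subgroup (G ⧸ N)).lowerCentralSeries (m + n + 2) := le_of_eq (by ring_nf)
      have h3 : ⁅⁅(⊤ : Subgroup (G ⧸ N)), (⊤ : Subgroup (G ⧸ N)).lowerCentralSeries n⁆,
          (⊤ : Subgroup (G ⧸ N)).lowerCentralSeries m⁆ = ⊥ :=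
        Subgroup.commutator_commutator_eq_bot_of_rotate h1 h2
      have hQ : ⁅(⊤ : Subgroup (G ⧸ N)).lowerCentralSeries m, (⊤ : Subgroup (G ⧸ N)).lowerCentralSeries (n + 1)⁆ = ⊥ := by
        rw [lcs_succ_eq, Subgroup.commutator_comm ((⊤ : Subgroup (G ⧸ N)).lowerCentralSeries n),
          Subgroup.commutator_comm]
        exact h3
      rw [← hker, ← Subgroup.map_eq_bot_iff, Subgroup.map_commutator,
        map_lcs_eq π hπ, map_lcs_eq π hπ, hQ]

private lemma comm_mul_central {G : Type*} [Group G] {z : G} (hz : z ∈ Subgroup.center G)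
    (g x : G) : ⁅g * z, x⁆ = ⁅g, x⁆ := by
  have h := Subgroup.mem_center_iff.mp hz
  have hzx : z * x * z⁻¹ = x := by rw [← h x, mul_inv_cancel_right]
  calc ⁅g * z, x⁆ = g * (z * x * z⁻¹) * g⁻¹ * x⁻¹ := by
        rw [commutatorElement_def]; group
    _ = ⁅g, x⁆ := by rw [hzx, commutatorElement_def]

/-- Corollary 2.2. For a group `G`, the subgroup `Inn(G)` of `IA(G)` satisfies
the Andreadakis equality (condition (1)) if and only if every central element of the Lie ring
`Lie(G)` of the lower central series is the class of a central element of `G` (condition (2)).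
Here `Γ_{k+1}(G) = (⊤ : Subgroup G).lowerCentralSeries k`, so indices are shifted by one:
`(⊤ : Subgroup G).lowerCentralSeries i'` is `Γ_{i'+1}(G)`. -/
theorem andreadakis_for_inner_lcs {G : Type*} [Group G] :
    (∀ j : ℕ, ∀ g : G,
        ((∀ i : ℕ, ∀ x ∈ (⊤ : Subgroup G).lowerCentralSeries i,
            ⁅g, x⁆ ∈ (⊤ : Subgroup G).lowerCentralSeries (i + j + 1)) ↔
          ∃ z ∈ Subgroup.center G, g * z ∈ (⊤ : Subgroup G).lowerCentralSeries j)) ↔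
    (∀ i : ℕ, ∀ g ∈ (⊤ : Subgroup G).lowerCentralSeries i,
        (∀ k : ℕ, ∀ x ∈ (⊤ : Subgroup G).lowerCentralSeries k,
            ⁅g, x⁆ ∈ (⊤ : Subgroup G).lowerCentralSeries (i + k + 2)) →
        ∃ z ∈ Subgroup.center G ⊓ (⊤ : Subgroup G).lowerCentralSeries i,
          g⁻¹ * z ∈ (⊤ : Subgroup G).lowerCentralSeries (i + 1)) := by
  constructor
  · intro h1 i g hg hcomm
    obtain ⟨z, hz, hgz⟩ := (h1 (i + 1) g).mp (fun k x hx => by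
      have := hcomm k x hx
      rwa [show i + k + 2 = k + (i + 1) + 1 by ring] at this)
    have hzmem : z ∈ (⊤ : Subgroup G).lowerCentralSeries i := by
      have : z = g⁻¹ * (g * z) := by group
      rw [this]
      exact mul_mem (inv_mem hg) (Subgroup.lowerCentralSeries_antitone ⊤ (Nat.le_succ i) hgz)
    refine ⟨z⁻¹, Subgroup.mem_inf.mpr ⟨inv_mem hz, inv_mem hzmem⟩, ?_⟩
    have : g⁻¹ * z⁻¹ = (z * g)⁻¹ := by group
    rw [this, ← Subgroup.mem_center_iff.mp hz g]
    exact inv_mem hgz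
  · intro h2 j g
    constructor
    · -- hard direction, by induction on j
      induction j generalizing g with
      | zero => exact fun _ => ⟨1, one_mem _, mem_top _⟩
      | succ j ih =>
        intro hg
        obtain ⟨z, hz, hgz⟩ := ih g (fun i x hx =>
          Subgroup.lowerCentralSeries_antitone ⊤ (by omega) (hg i x hx))
        obtain ⟨w, hwmem, hgw⟩ := h2 j (g * z) hgz (fun k x hx => by
          rw [comm_mul_central hz]
          have := hg k x hx
          rwa [show k + (j + 1) + 1 = j + k + 2 by ring] at this)
        have hw := (Subgroup.mem_inf.mp hwmem).1
        refine ⟨z * w⁻¹, mul_mem hz (inv_mem hw), ?_⟩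
        have : g * (z * w⁻¹) = ((g * z)⁻¹ * w)⁻¹ := by
          rw [mul_inv_rev, inv_inv, ← Subgroup.mem_center_iff.mp (inv_mem hw) (g * z)]
          group
        rw [this]
        exact inv_mem hgw
    · rintro ⟨z, hz, hgz⟩ i x hx
      rw [← comm_mul_central hz g x]
      have := Subgroup.commutator_mem_commutator hgz hx
      have h := lcs_comm_le i (G := G) j this
      rwa [show j + i + 1 = i + j + 1 by ring] at h
end

section
/- Let n ≥ 1, let F_n be the free group on x_1, …, x_n, and let ∂_n = x_1⋯x_n. Inside Aut(F_n), the intersection of Aut^∂_C(F_n) with the subgroup Inn(F_n) of inner automorphisms is the cyclic subgroup {c_{∂_n}^m : m ∈ ℤ} generated by the inner automorphism c_{∂_n} : x ↦ ∂_n x ∂_n⁻¹. Moreover, c_{∂_n} commutes with every element of Aut^∂_C(F_n). -/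
/-- Distinct generators of a free group do not commute. -/
lemma freeGroup_of_commute {X : Type*} {i j : X} (h : Commute (FreeGroup.of i) (FreeGroup.of j)) :
    i = j := by
  by_contra hij
  letI := Classical.decEq X
  have h2 := h.map
    (FreeGroup.lift (fun x : X => if x = i then Equiv.swap (0 : Fin 3) 1 else Equiv.swap 1 2))
  rw [FreeGroup.lift_apply_of, FreeGroup.lift_apply_of, if_pos rfl,
    if_neg (fun hji : j = i => hij hji.symm)] at h2
  exact absurd h2 (by unfold Commute SemiconjBy; decide)

lemma freeGroup_subsingleton_zpow {X : Type*} [Subsingleton X] (w : FreeGroup X) :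
    ∃ m : ℤ, ∀ a : X, w = (FreeGroup.of a) ^ m := by
  refine FreeGroup.induction_on w ⟨0, fun a => by simp⟩ (fun x => ⟨1, fun a => by
    rw [zpow_one, Subsingleton.elim a x]⟩) ?_ ?_
  · rintro x ⟨m, hm⟩
    exact ⟨-m, fun a => by rw [zpow_neg, ← hm a]⟩
  · rintro x y ⟨m, hm⟩ ⟨k, hk⟩
    exact ⟨m + k, fun a => by rw [zpow_add, ← hm a, ← hk a]⟩

/-- An abelian free group is cyclic. -/
lemma isFreeGroup_cyclic {G : Type*} [Group G] [IsFreeGroup G]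
    (hcomm : ∀ x y : G, Commute x y) : ∃ r : G, ∀ x : G, x ∈ Subgroup.zpowers r := by
  classical
  set e := IsFreeGroup.mulEquiv G with he
  have hsub : Subsingleton (IsFreeGroup.Generators G) := by
    refine ⟨fun i j => freeGroup_of_commute (i := i) (j := j) ?_⟩
    have h2 := (hcomm (e (FreeGroup.of i)) (e (FreeGroup.of j))).map e.symm.toMonoidHom
    simpa using h2
  rcases isEmpty_or_nonempty (IsFreeGroup.Generators G) with hE | ⟨⟨a⟩⟩
  · refine ⟨1, fun x => ?_⟩
    obtain ⟨w, rfl⟩ := e.surjective x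
    have hw : w = 1 := by
      refine FreeGroup.induction_on w rfl (fun x => hE.elim x) (fun x _ => hE.elim x) ?_
      rintro x y rfl rfl; simp
    simp [hw]
  · refine ⟨e (FreeGroup.of a), fun x => ?_⟩
    obtain ⟨w, rfl⟩ := e.surjective x
    obtain ⟨m, hm⟩ := freeGroup_subsingleton_zpow w
    refine ⟨m, ?_⟩
    show e (FreeGroup.of a) ^ m = e w
    rw [← map_zpow]
    exact (congrArg e (hm a)).symm

/-- The closure of two commuting elements is abelian. -/
lemma closure_pair_comm {G : Type*} [Group G] {a b : G} (hab : Commute a b)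
    (x y : G) (hx : x ∈ Subgroup.closure {a, b}) (hy : y ∈ Subgroup.closure {a, b}) :
    Commute x y := by
  have key : ∀ z ∈ Subgroup.closure ({a, b} : Set G), Commute a z ∧ Commute b z := by
    intro z hz
    induction hz using Subgroup.closure_induction with
    | mem z hz =>
      rcases hz with rfl | rfl
      · exact ⟨Commute.refl _, hab.symm⟩
      · exact ⟨hab, Commute.refl _⟩
    | one => exact ⟨Commute.one_right _, Commute.one_right _⟩
    | mul z w _ _ hz hw => exact ⟨hz.1.mul_right hw.1, hz.2.mul_right hw.2⟩
    | inv z _ hz => exact ⟨hz.1.inv_right, hz.2.inv_right⟩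
  induction hx using Subgroup.closure_induction with
  | mem z hz =>
    rcases hz with rfl | rfl
    · exact (key y hy).1
    · exact (key y hy).2
  | one => exact Commute.one_left _
  | mul z w _ _ hz hw => exact hz.mul_left hw
  | inv z _ hz => exact hz.inv_left

/-- Two commuting elements of a free group are powers of a common element. -/
lemma freeGroup_commute_exists_root {X : Type*} {a b : FreeGroup X} (hab : Commute a b) :
    ∃ r : FreeGroup X, a ∈ Subgroup.zpowers r ∧ b ∈ Subgroup.zpowers r := by
  set H : Subgroup (FreeGroup X) := Subgroup.closure {a, b} with hH
  have ha : a ∈ H := Subgroup.subset_closure (by simp)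
  have hb : b ∈ H := Subgroup.subset_closure (by simp)
  have : IsFreeGroup H := inferInstance
  obtain ⟨r, hr⟩ := isFreeGroup_cyclic (G := H) (fun x y => by
    have := closure_pair_comm hab x y x.2 y.2
    exact Subtype.ext this)
  obtain ⟨m, hm⟩ := hr ⟨a, ha⟩
  obtain ⟨k, hk⟩ := hr ⟨b, hb⟩
  refine ⟨(r : FreeGroup X), ⟨m, ?_⟩, ⟨k, ?_⟩⟩
  · simpa using congrArg Subtype.val hm
  · simpa using congrArg Subtype.val hk



/-- The boundary element `∂_n = x_1 ⋯ x_n` of the free group on `n` generators. -/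
def boundary (n : ℕ) : FreeGroup (Fin n) :=
  (List.ofFn fun i : Fin n => FreeGroup.of i).prod

/-- The subgroup `Aut^∂_C(F_n)` of automorphisms fixing the boundary element and sending each
generator to a conjugate of itself; by Artin's theorem it is isomorphic to the pure braid
group `P_n`. -/
def AutBC (n : ℕ) : Subgroup (MulAut (FreeGroup (Fin n))) where
  carrier := {φ | φ (boundary n) = boundary n ∧
    ∀ i : Fin n, IsConj (FreeGroup.of i) (φ (FreeGroup.of i))}
  one_mem' := ⟨rfl, fun _ => IsConj.refl _⟩
  mul_mem' := by
    rintro φ ψ ⟨hφ1, hφ2⟩ ⟨hψ1, hψ2⟩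
    refine ⟨?_, fun i => ?_⟩
    · show φ (ψ (boundary n)) = boundary n
      rw [hψ1, hφ1]
    · show IsConj (FreeGroup.of i) (φ (ψ (FreeGroup.of i)))
      exact (hφ2 i).trans (φ.toMonoidHom.map_isConj (hψ2 i))
  inv_mem' := by
    rintro φ ⟨hφ1, hφ2⟩
    refine ⟨?_, fun i => ?_⟩
    · show φ⁻¹ (boundary n) = boundary n
      conv_lhs => rw [← hφ1]
      exact φ.symm_apply_apply _
    · show IsConj (FreeGroup.of i) (φ⁻¹ (FreeGroup.of i))
      have h1 := (φ⁻¹ : MulAut (FreeGroup (Fin n))).toMonoidHom.map_isConj (hφ2 i)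
      simp only [MulEquiv.coe_toMonoidHom] at h1
      have h2 : φ⁻¹ (φ (FreeGroup.of i)) = FreeGroup.of i := φ.symm_apply_apply _
      rw [h2] at h1
      exact h1.symm

/-- Lemma 3.4. Inside `Aut(F_n)`, the intersection of `Aut^∂_C(F_n)` with
the subgroup `Inn(F_n)` of inner automorphisms is the cyclic subgroup generated by
`c_{∂_n}`; moreover `c_{∂_n}` commutes with every element of `Aut^∂_C(F_n)`. -/
theorem AutBC_inter_inn (n : ℕ) (hn : 1 ≤ n) :
    AutBC n ⊓ (MulAut.conj : FreeGroup (Fin n) →* MulAut (FreeGroup (Fin n))).range =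
        Subgroup.zpowers (MulAut.conj (boundary n)) ∧
      ∀ φ ∈ AutBC n, MulAut.conj (boundary n) * φ = φ * MulAut.conj (boundary n) := by
  constructor
  · apply le_antisymm
    · rintro φ ⟨⟨hb, -⟩, g, rfl⟩
      have hcomm : Commute g (boundary n) := by
        have h1 : g * boundary n * g⁻¹ = boundary n := by
          rw [← MulAut.conj_apply]; exact hb
        exact mul_inv_eq_iff_eq_mul.mp h1
      obtain ⟨r, ⟨m, hg⟩, ⟨k, hk⟩⟩ := freeGroup_commute_exists_root hcomm
      replace hg : r ^ m = g := hg
      replace hk : r ^ k = boundary n := hk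
      subst hg
      -- abelianization coordinate at 0
      classical
      set i0 : Fin n := ⟨0, hn⟩
      set ab : FreeGroup (Fin n) →* Multiplicative ℤ :=
        FreeGroup.lift (fun i => if i = i0 then Multiplicative.ofAdd 1 else 1) with hab
      have habb : ab (boundary n) = Multiplicative.ofAdd 1 := by
        rw [boundary, map_list_prod, List.map_ofFn, List.prod_ofFn]
        have : ∀ i : Fin n, (ab ∘ fun i : Fin n => FreeGroup.of i) i
            = if i = i0 then Multiplicative.ofAdd 1 else 1 := by
          intro i; simp [hab]
        rw [Finset.prod_congr rfl (fun i _ => this i), Finset.prod_ite_eq' Finset.univ i0]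
        simp
      have hku : IsUnit k := by
        have h2 : (ab r) ^ k = Multiplicative.ofAdd (1 : ℤ) := by
          rw [← map_zpow, hk, habb]
        have h3 := congrArg Multiplicative.toAdd h2
        rw [toAdd_zpow, smul_eq_mul, toAdd_ofAdd] at h3
        exact IsUnit.of_mul_eq_one (a := k) _ h3
      rcases Int.isUnit_iff.mp hku with rfl | rfl
      · refine ⟨m, ?_⟩
        rw [zpow_one] at hk
        show MulAut.conj (boundary n) ^ m = MulAut.conj (r ^ m)
        rw [hk, ← map_zpow]
      · refine ⟨-m, ?_⟩
        have hr : r = (boundary n)⁻¹ := by rw [← hk]; group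
        show MulAut.conj (boundary n) ^ (-m) = MulAut.conj (r ^ m)
        rw [hr, ← map_zpow]
        congr 1
        group
    · rw [Subgroup.zpowers_le]
      refine ⟨⟨?_, fun i => ?_⟩, ⟨boundary n, rfl⟩⟩
      · rw [MulAut.conj_apply]; group
      · rw [MulAut.conj_apply, isConj_iff]
        exact ⟨boundary n, rfl⟩
  · rintro φ ⟨hb, -⟩
    ext x
    show MulAut.conj (boundary n) (φ x) = φ (MulAut.conj (boundary n) x)
    rw [MulAut.conj_apply, MulAut.conj_apply, map_mul, map_mul, map_inv, hb]
end

section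
/- Let n ≥ 1 and let 𝔏_n be the free Lie ring (free Lie algebra over ℤ) on generators X_1, …, X_n. Let a_1, …, a_n be integers whose greatest common divisor is 1, let d be a nonzero integer, and set X = d·(a_1 X_1 + ⋯ + a_n X_n) ∈ 𝔏_n. Then the centralizer of X in 𝔏_n equals the set of integer multiples of a_1 X_1 + ⋯ + a_n X_n; that is, for y ∈ 𝔏_n one has ⁅y, X⁆ = 0 if and only if y = m·(a_1 X_1 + ⋯ + a_n X_n) for some m ∈ ℤ. -/
/-!
Proof that in the free Lie ring on `n` generators, the centralizer of
`d • (∑ aᵢ Xᵢ)` (with `gcd aᵢ = 1`, `d ≠ 0`) is `ℤ • (∑ aᵢ Xᵢ)`.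

Strategy: we develop the Lyndon basis of the free Lie ring, prove that the
canonical morphism `ψ` to the monoid algebra of the free monoid (the tensor
algebra) is injective via a triangularity argument, compute centralizers of
degree-one elements in the tensor algebra by elementary coefficient
manipulations, and transport the result back through `ψ`.
-/

namespace FLR
open List

variable {α : Type*} [LinearOrder α]

open List

variable {α : Type*} [LinearOrder α]

theorem lt_is_lex {x y : List α} : x < y ↔ List.Lex (· < ·) x y := Iff.rfl

theorem nil_lt {y : List α} (h : y ≠ []) : ([] : List α) < y := by
  cases y with
  | nil => exact absurd rfl h
  | cons b t => exact List.Lex.nil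

/-- L7 : a list is smaller than itself appended with a nonempty list -/
theorem lt_append_self (x : List α) {s : List α} (hs : s ≠ []) : x < x ++ s := by
  induction x with
  | nil => simpa using nil_lt hs
  | cons a t ih => exact List.Lex.cons ih

/-- prefix and not equal implies less -/
theorem lt_of_prefix_ne {x y : List α} (h : x <+: y) (hne : x ≠ y) : x < y := by
  obtain ⟨t, rfl⟩ := h
  apply lt_append_self
  rintro rfl; exact hne (by simp)

/-- L3 : prepending preserves strict inequality -/
theorem append_lt_append_left {x y : List α} (p : List α) (h : x < y) : p ++ x < p ++ y := by
  induction p with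
  | nil => exact h
  | cons a t ih => exact List.Lex.cons ih

theorem append_le_append_left {x y : List α} (p : List α) (h : x ≤ y) : p ++ x ≤ p ++ y := by
  rcases eq_or_lt_of_le h with rfl | h
  · exact le_refl _
  · exact le_of_lt (append_lt_append_left p h)

/-- L5 : cancel common prefix -/
theorem lt_of_append_lt_append_left {x y : List α} (p : List α) (h : p ++ x < p ++ y) : x < y := by
  induction p with
  | nil => exact h
  | cons a t ih =>
    cases h with
    | rel h' => exact absurd h' (lt_irrefl a)
    | cons h' => exact ih h'

/-- L6' : strict inequality not by prefix is robust under appending on both sides -/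
theorem append_lt_append_of_lt_of_not_prefix :
    ∀ {x y : List α}, x < y → ¬ x <+: y → ∀ (s t : List α), x ++ s < y ++ t := by
  intro x y h
  induction h with
  | nil => intro hp; exact absurd nil_prefix hp
  | @rel a l₁ b l₂ hab => intro _ s t; exact List.Lex.rel hab
  | @cons a l₁ l₂ h ih =>
    intro hp s t
    refine List.Lex.cons (ih ?_ s t)
    intro hpre
    exact hp (by simpa using hpre)

/-- L1 : same-length strict inequality is robust under appending -/
theorem append_lt_append_of_lt_of_length_le {x y : List α} (h : x < y)
    (hlen : y.length ≤ x.length) (s t : List α) : x ++ s < y ++ t := by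
  refine append_lt_append_of_lt_of_not_prefix h ?_ s t
  intro hp
  have := hp.eq_of_length_le hlen
  subst this; exact lt_irrefl _ h

theorem append_le_append {x y v w : List α} (hxy : x ≤ y) (hlen : x.length = y.length)
    (hvw : v ≤ w) : x ++ v ≤ y ++ w := by
  rcases eq_or_lt_of_le hxy with rfl | h
  · exact append_le_append_left x hvw
  · exact le_of_lt (append_lt_append_of_lt_of_length_le h hlen.ge v w)

/-- splitting a strict inequality into the prefix case and the "robust" case -/
theorem lt_cases {x y : List α} (h : x < y) :
    (x <+: y) ∨ (∀ s t : List α, x ++ s < y ++ t) := by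
  by_cases hp : x <+: y
  · exact Or.inl hp
  · exact Or.inr (append_lt_append_of_lt_of_not_prefix h hp)

/-- generic helper: x < y implies x ++ s < y ++ t  OR y = x ++ r .  Useful combined form:
if `x < y` then for any `s`, `x < y ++ s`. -/
theorem lt_append_right {x y : List α} (h : x < y) (s : List α) : x < y ++ s := by
  rcases lt_cases h with hp | hr
  · obtain ⟨t, rfl⟩ := hp
    rcases eq_or_ne t [] with rfl | ht
    · simp at h
    · calc x < x ++ t := lt_append_self x ht
        _ ≤ (x ++ t) ++ s := by
            rcases eq_or_ne s [] with rfl | hs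
            · simp
            · exact le_of_lt (lt_append_self _ hs)
  · have := hr [] s
    simpa using this



/-- the proper nonempty suffixes of `w` -/
def psuffixes (w : List α) : List (List α) :=
  w.tails.filter (fun s => decide (s ≠ [] ∧ s.length < w.length))

theorem mem_psuffixes {w s : List α} :
    s ∈ psuffixes w ↔ s <:+ w ∧ s ≠ [] ∧ s.length < w.length := by
  simp [psuffixes, List.mem_filter, List.mem_tails, and_assoc]

/-- minimal proper nonempty suffix -/
def mps (w : List α) : List α := (psuffixes w).foldr min w.tail

theorem foldr_min_le_init {β : Type*} [LinearOrder β] (l : List β) (b : β) :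
    l.foldr min b ≤ b := by
  induction l with
  | nil => exact le_refl b
  | cons a t ih => exact le_trans (min_le_right _ _) ih

theorem foldr_min_le_mem {β : Type*} [LinearOrder β] {l : List β} {c : β} (b : β) (h : c ∈ l) :
    l.foldr min b ≤ c := by
  induction l with
  | nil => simp at h
  | cons a t ih =>
    rcases List.mem_cons.1 h with rfl | h'
    · exact min_le_left _ _
    · exact le_trans (min_le_right _ _) (ih h')

theorem foldr_min_mem_or_eq {β : Type*} [LinearOrder β] (l : List β) (b : β) :
    l.foldr min b ∈ l ∨ l.foldr min b = b := by
  induction l with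
  | nil => exact Or.inr rfl
  | cons a t ih =>
    rcases min_cases a (t.foldr min b) with ⟨h, _⟩ | ⟨h, _⟩
    · exact Or.inl (by rw [List.foldr_cons, h]; exact List.mem_cons_self)
    · rcases ih with h' | h'
      · exact Or.inl (by rw [List.foldr_cons, h]; exact List.mem_cons_of_mem _ h')
      · exact Or.inr (by rw [List.foldr_cons, h, h'])

theorem tail_mem_psuffixes {w : List α} (hw : 2 ≤ w.length) : w.tail ∈ psuffixes w := by
  rw [mem_psuffixes]
  refine ⟨List.tail_suffix w, ?_, ?_⟩
  · intro h
    have := congrArg List.length h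
    simp [List.length_tail] at this
    omega
  · rw [List.length_tail]; omega

theorem mps_mem {w : List α} (hw : 2 ≤ w.length) : mps w ∈ psuffixes w := by
  rcases foldr_min_mem_or_eq (psuffixes w) w.tail with h | h
  · exact h
  · rw [mps, h]; exact tail_mem_psuffixes hw

theorem mps_min {w s : List α} (h : s ∈ psuffixes w) : mps w ≤ s :=
  foldr_min_le_mem _ h

theorem mps_suffix {w : List α} (hw : 2 ≤ w.length) : mps w <:+ w :=
  (mem_psuffixes.1 (mps_mem hw)).1

theorem mps_ne_nil {w : List α} (hw : 2 ≤ w.length) : mps w ≠ [] :=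
  (mem_psuffixes.1 (mps_mem hw)).2.1

theorem mps_length_lt {w : List α} (hw : 2 ≤ w.length) : (mps w).length < w.length :=
  (mem_psuffixes.1 (mps_mem hw)).2.2

/-- Lyndon word: strictly smaller than all of its proper nonempty suffixes -/
def IsLyndon (w : List α) : Prop :=
  w ≠ [] ∧ ∀ s, s <:+ w → s ≠ [] → s.length < w.length → w < s

theorem isLyndon_singleton (i : α) : IsLyndon [i] := by
  refine ⟨by simp, ?_⟩
  intro s _ hne hlen
  exfalso
  have hpos : 0 < s.length := List.length_pos_iff.2 hne
  simp only [List.length_singleton] at hlen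
  omega

theorem IsLyndon.ne_nil {w : List α} (h : IsLyndon w) : w ≠ [] := h.1

theorem IsLyndon.lt_suffix {w s : List α} (h : IsLyndon w) (hs : s <:+ w) (hne : s ≠ [])
    (hne' : s ≠ w) : w < s := by
  refine h.2 s hs hne ?_
  rcases hs with ⟨p, rfl⟩
  rcases eq_or_ne p [] with rfl | hp
  · simp at hne'
  · simp only [List.length_append]
    have : 0 < p.length := List.length_pos_iff.2 hp
    omega

/-- take-part of the standard factorization -/
def lfac (w : List α) : List α := w.take (w.length - (mps w).length)

theorem lfac_append_mps {w : List α} (hw : 2 ≤ w.length) : lfac w ++ mps w = w := by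
  obtain ⟨p, hp⟩ := mps_suffix hw
  have hl : p.length = w.length - (mps w).length := by
    have := congrArg List.length hp
    simp [List.length_append] at this
    omega
  have htl := List.take_left (l₁ := p) (l₂ := mps w)
  rw [hp] at htl
  have : lfac w = p := by rw [lfac, ← hl, htl]
  rw [this, hp]

theorem lfac_ne_nil {w : List α} (hw : 2 ≤ w.length) : lfac w ≠ [] := by
  intro h
  have := congrArg List.length (lfac_append_mps hw)
  rw [h] at this
  simp at this
  have := mps_length_lt hw
  omega

theorem lfac_length {w : List α} (hw : 2 ≤ w.length) :
    (lfac w).length = w.length - (mps w).length := by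
  have := congrArg List.length (lfac_append_mps hw)
  simp [List.length_append] at this
  omega

/-- the minimal proper suffix of a Lyndon word is Lyndon -/
theorem IsLyndon.mps_isLyndon {w : List α} (h : IsLyndon w) (hw : 2 ≤ w.length) :
    IsLyndon (mps w) := by
  refine ⟨mps_ne_nil hw, ?_⟩
  intro s hs hne hlen
  have hsw : s <:+ w := hs.trans (mps_suffix hw)
  have hmem : s ∈ psuffixes w := mem_psuffixes.2 ⟨hsw, hne, lt_trans hlen (mps_length_lt hw)⟩
  have hle := mps_min hmem
  exact lt_of_le_of_ne hle (fun hh => by rw [hh] at hlen; exact lt_irrefl _ hlen)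

theorem IsLyndon.lt_mps {w : List α} (h : IsLyndon w) (hw : 2 ≤ w.length) : w < mps w :=
  h.lt_suffix (mps_suffix hw) (mps_ne_nil hw)
    (fun hh => by have := mps_length_lt hw; rw [hh] at this; exact lt_irrefl _ this)

theorem lfac_prefix_lt {w : List α} (hw : 2 ≤ w.length) : lfac w < w := by
  refine lt_of_prefix_ne ⟨mps w, lfac_append_mps hw⟩ ?_
  intro hh
  have := congrArg List.length hh
  rw [lfac_length hw] at this
  have := mps_length_lt hw
  have h2 := mps_ne_nil hw
  have : 0 < (mps w).length := List.length_pos_iff.2 h2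
  omega

theorem IsLyndon.lfac_lt_mps {w : List α} (h : IsLyndon w) (hw : 2 ≤ w.length) :
    lfac w < mps w := lt_trans (lfac_prefix_lt hw) (h.lt_mps hw)

/-- the prefix-part of the standard factorization of a Lyndon word is Lyndon -/
theorem IsLyndon.lfac_isLyndon {w : List α} (h : IsLyndon w) (hw : 2 ≤ w.length) :
    IsLyndon (lfac w) := by
  refine ⟨lfac_ne_nil hw, ?_⟩
  intro s hs hne hlen
  by_contra hcon
  push_neg at hcon
  have hslt : s < lfac w :=
    lt_of_le_of_ne hcon (fun hh => by rw [hh] at hlen; exact lt_irrefl _ hlen)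
  have hlfl := lfac_length hw
  have hmlt := mps_length_lt hw
  have hmpos : 0 < (mps w).length := List.length_pos_iff.2 (mps_ne_nil hw)
  have hspos : 0 < s.length := List.length_pos_iff.2 hne
  -- s ++ mps w is a proper nonempty suffix of w
  have hsfx : s ++ mps w <:+ w := by
    rcases hs with ⟨p, hp⟩
    exact ⟨p, by rw [← List.append_assoc, hp, lfac_append_mps hw]⟩
  have hlen2 : (s ++ mps w).length < w.length := by
    simp only [List.length_append]; omega
  have hwlt : w < s ++ mps w := h.2 _ hsfx (by simp [mps_ne_nil hw]) hlen2
  by_cases hpre : s <+: lfac w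
  · -- prefix case
    have hsw : s <+: w := hpre.trans ⟨mps w, lfac_append_mps hw⟩
    obtain ⟨u', hu'⟩ := hsw
    have hu'len : s.length + u'.length = w.length := by
      have := congrArg List.length hu'
      simpa [List.length_append] using this
    have hu'ne : u' ≠ [] := by
      intro hh
      rw [hh, List.length_nil] at hu'len
      omega
    have hu'mem : u' ∈ psuffixes w := by
      rw [mem_psuffixes]
      exact ⟨⟨s, hu'⟩, hu'ne, by omega⟩
    have h5 : mps w ≤ u' := mps_min hu'mem
    have h6 : s ++ u' < s ++ mps w := by rw [hu']; exact hwlt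
    have : u' < mps w := lt_of_append_lt_append_left s h6
    exact absurd h5 (not_le.2 this)
  · -- non-prefix case
    have : s ++ mps w < lfac w ++ mps w :=
      append_lt_append_of_lt_of_not_prefix hslt hpre _ _
    rw [lfac_append_mps hw] at this
    exact absurd hwlt (not_lt.2 (le_of_lt this))

/-- u < v both Lyndon implies uv < v -/
theorem append_lt_right {u v : List α} (hu : IsLyndon u) (hv : IsLyndon v) (huv : u < v) :
    u ++ v < v := by
  by_cases hpre : u <+: v
  · obtain ⟨v₂, hv₂⟩ := hpre
    have hv₂ne : v₂ ≠ [] := by rintro rfl; rw [List.append_nil] at hv₂; subst hv₂; exact lt_irrefl _ huv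
    have : v < v₂ := by
      refine hv.2 v₂ ⟨u, hv₂⟩ hv₂ne ?_
      have := congrArg List.length hv₂
      simp only [List.length_append] at this
      have : 0 < u.length := List.length_pos_iff.2 hu.ne_nil
      omega
    calc u ++ v < u ++ v₂ := append_lt_append_left u this
      _ = v := hv₂
  · have := append_lt_append_of_lt_of_not_prefix huv hpre v []
    simpa using this

/-- u < v both Lyndon implies uv < vu  (exchange lemma) -/
theorem append_exchange {u v : List α} (hu : IsLyndon u) (hv : IsLyndon v) (huv : u < v) :
    u ++ v < v ++ u := by
  by_cases hpre : u <+: v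
  · obtain ⟨v₂, hv₂⟩ := hpre
    have hv₂ne : v₂ ≠ [] := by rintro rfl; rw [List.append_nil] at hv₂; subst hv₂; exact lt_irrefl _ huv
    have hvlt : v < v₂ := by
      refine hv.2 v₂ ⟨u, hv₂⟩ hv₂ne ?_
      have := congrArg List.length hv₂
      simp only [List.length_append] at this
      have : 0 < u.length := List.length_pos_iff.2 hu.ne_nil
      omega
    have hlen : v₂.length ≤ v.length := by
      have := congrArg List.length hv₂
      simp only [List.length_append] at this
      omega
    have h2 : v ++ [] < v₂ ++ u := append_lt_append_of_lt_of_length_le hvlt hlen [] u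
    rw [List.append_nil] at h2
    calc u ++ v < u ++ (v₂ ++ u) := append_lt_append_left u h2
      _ = (u ++ v₂) ++ u := by rw [List.append_assoc]
      _ = v ++ u := by rw [hv₂]
  · exact append_lt_append_of_lt_of_not_prefix huv hpre v u

/-- decomposition of suffixes of an append -/
theorem suffix_append_cases {s u v : List α} (h : s <:+ u ++ v) :
    s <:+ v ∨ ∃ s₂, s₂ <:+ u ∧ s₂ ≠ [] ∧ s = s₂ ++ v := by
  obtain ⟨p, hp⟩ := h
  by_cases hl : u.length ≤ p.length
  · left
    refine ⟨p.drop u.length, ?_⟩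
    have := congrArg (List.drop u.length) hp
    rw [List.drop_append, List.drop_append,
      Nat.sub_eq_zero_of_le hl, List.drop_length, List.drop_zero, Nat.sub_self,
      List.drop_zero, List.nil_append] at this
    exact this
  · right
    push_neg at hl
    refine ⟨u.drop p.length, List.drop_suffix _ _, ?_, ?_⟩
    · intro hh
      have := congrArg List.length hh
      simp only [List.length_drop, List.length_nil] at this
      omega
    · have := congrArg (List.drop p.length) hp
      rw [List.drop_left, List.drop_append,
        Nat.sub_eq_zero_of_le (le_of_lt hl), List.drop_zero] at this
      exact this

/-- uv is Lyndon when u < v are Lyndon -/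
theorem IsLyndon.append {u v : List α} (hu : IsLyndon u) (hv : IsLyndon v) (huv : u < v) :
    IsLyndon (u ++ v) := by
  refine ⟨by simp [hu.ne_nil], ?_⟩
  intro s hs hne hlen
  rcases suffix_append_cases hs with hsv | ⟨s₂, hs₂, hs₂ne, rfl⟩
  · rcases eq_or_ne s v with rfl | hsvne
    · exact append_lt_right hu hv huv
    · have : v < s := hv.lt_suffix hsv hne hsvne
      exact lt_trans (append_lt_right hu hv huv) this
  · have hs₂u : s₂ ≠ u := by
      intro h; subst h
      simp only [List.length_append] at hlen; omega
    have hs₂len : s₂.length < u.length := by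
      have := hs₂.length_le
      rcases lt_or_eq_of_le this with h' | h'
      · exact h'
      · exact absurd (hs₂.eq_of_length h') hs₂u
    have hult : u < s₂ := hu.lt_suffix hs₂ hs₂ne hs₂u
    exact append_lt_append_of_lt_of_length_le hult (le_of_lt hs₂len) v v

/-- standard factorization recognition -/
theorem mps_append_eq {u v : List α} (hu : IsLyndon u) (hv : IsLyndon v) (huv : u < v)
    (hstd : u.length = 1 ∨ v ≤ mps u) : mps (u ++ v) = v := by
  have hlu : 0 < u.length := List.length_pos_iff.2 hu.ne_nil
  have hlv : 0 < v.length := List.length_pos_iff.2 hv.ne_nil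
  have h2 : 2 ≤ (u ++ v).length := by simp only [List.length_append]; omega
  have hLB : ∀ s ∈ psuffixes (u ++ v), v ≤ s := by
    intro s hsmem
    obtain ⟨hs, hne, hlen⟩ := mem_psuffixes.1 hsmem
    rcases suffix_append_cases hs with hsv | ⟨s₂, hs₂, hs₂ne, rfl⟩
    · rcases eq_or_ne s v with heq | hsvne
      · exact heq.ge
      · exact le_of_lt (hv.lt_suffix hsv hne hsvne)
    · have hs₂u : s₂ ≠ u := by
        intro h; subst h
        simp only [List.length_append] at hlen; omega
      have hs₂lt : s₂.length < u.length := by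
        have := hs₂.length_le
        rcases lt_or_eq_of_le this with h' | h'
        · exact h'
        · exact absurd (hs₂.eq_of_length h') hs₂u
      rcases hstd with h1 | h1
      · exfalso
        have : 0 < s₂.length := List.length_pos_iff.2 hs₂ne
        omega
      · have hu2 : 2 ≤ u.length := by
          have : 0 < s₂.length := List.length_pos_iff.2 hs₂ne
          omega
        have : mps u ≤ s₂ := mps_min (mem_psuffixes.2 ⟨hs₂, hs₂ne, hs₂lt⟩)
        have hvs₂ : v ≤ s₂ := le_trans h1 this
        rcases eq_or_lt_of_le hvs₂ with heq | hlt
        · rw [← heq]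
          exact le_of_lt (lt_append_self v hv.ne_nil)
        · exact le_of_lt (lt_append_right hlt v)
  have hvmem : v ∈ psuffixes (u ++ v) := by
    rw [mem_psuffixes]
    refine ⟨⟨u, rfl⟩, hv.ne_nil, by simp only [List.length_append]; omega⟩
  exact le_antisymm (mps_min hvmem) (hLB _ (mps_mem h2))



noncomputable def mu : List α → FreeLieAlgebra ℤ α
  | [] => 0
  | [i] => FreeLieAlgebra.of ℤ i
  | a :: b :: t => ⁅mu (lfac (a :: b :: t)), mu (mps (a :: b :: t))⁆
termination_by w => w.length
decreasing_by
  · have hw : 2 ≤ (a :: b :: t).length := by simp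
    have h1 := mps_length_lt hw
    have h2 := mps_ne_nil hw
    have h3 : 0 < (mps (a :: b :: t)).length := List.length_pos_iff.2 h2
    have h4 := lfac_length hw
    simp only [List.length_cons] at *
    omega
  · have hw : 2 ≤ (a :: b :: t).length := by simp
    have h1 := mps_length_lt hw
    simp only [List.length_cons] at *
    omega

theorem mu_nil : mu ([] : List α) = 0 := by rw [mu]

theorem mu_single (i : α) : mu [i] = FreeLieAlgebra.of ℤ i := by rw [mu]

theorem mu_eq {w : List α} (hw : 2 ≤ w.length) : mu w = ⁅mu (lfac w), mu (mps w)⁆ := by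
  match w with
  | [] => simp at hw
  | [i] => simp at hw
  | a :: b :: t => rw [mu]

attribute [local instance] LieRing.ofAssociativeRing

instance monoidAlgebraCoeFun {R M : Type*} [Semiring R] :
    CoeFun (MonoidAlgebra R M) (fun _ => M → R) := ⟨fun f => ⇑f.coeff⟩

/-- the canonical Lie algebra morphism into the monoid algebra of the free monoid -/
noncomputable def psi : FreeLieAlgebra ℤ α →ₗ⁅ℤ⁆ MonoidAlgebra ℤ (FreeMonoid α) :=
  FreeLieAlgebra.lift ℤ (fun i => MonoidAlgebra.single (FreeMonoid.of i) 1)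

theorem psi_of (i : α) : psi (FreeLieAlgebra.of ℤ i)
    = MonoidAlgebra.single (FreeMonoid.of i) 1 := FreeLieAlgebra.lift_of_apply _ i

/-- all words in the support have length `k` -/
def SuppLen (k : ℕ) (f : MonoidAlgebra ℤ (FreeMonoid α)) : Prop :=
  ∀ m : FreeMonoid α, f m ≠ 0 → (FreeMonoid.toList m).length = k

theorem split_eq {b c : FreeMonoid α} {x : List α} {k : ℕ}
    (h : b * c = FreeMonoid.ofList x) (hb : (FreeMonoid.toList b).length = k) :
    b = FreeMonoid.ofList (x.take k) ∧ c = FreeMonoid.ofList (x.drop k) ∧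
      x.length = k + (FreeMonoid.toList c).length := by
  have htl : FreeMonoid.toList b ++ FreeMonoid.toList c = x := by
    have := congrArg FreeMonoid.toList h
    rwa [FreeMonoid.toList_mul, FreeMonoid.toList_ofList] at this
  have h1 : x.take k = FreeMonoid.toList b := by
    rw [← htl, ← hb, List.take_left]
  have h2 : x.drop k = FreeMonoid.toList c := by
    rw [← htl, ← hb, List.drop_left]
  refine ⟨?_, ?_, ?_⟩
  · apply FreeMonoid.toList.injective
    rw [FreeMonoid.toList_ofList, h1]
  · apply FreeMonoid.toList.injective
    rw [FreeMonoid.toList_ofList, h2]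
  · rw [← htl, List.length_append, hb]

theorem mul_apply_suppLen {f g : MonoidAlgebra ℤ (FreeMonoid α)} {k l : ℕ}
    (hf : SuppLen k f) (hg : SuppLen l g) (x : List α) :
    (f * g) (FreeMonoid.ofList x) =
      if x.length = k + l then
        f (FreeMonoid.ofList (x.take k)) * g (FreeMonoid.ofList (x.drop k)) else 0 := by
  classical
  rw [MonoidAlgebra.mul_apply]
  by_cases hx : x.length = k + l
  · rw [if_pos hx]
    rw [Finsupp.sum]
    by_cases hmem : FreeMonoid.ofList (x.take k) ∈ f.coeff.support ∧ FreeMonoid.ofList (x.drop k) ∈ g.coeff.support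
    · rw [Finset.sum_eq_single (FreeMonoid.ofList (x.take k))]
      · rw [Finsupp.sum, Finset.sum_eq_single (FreeMonoid.ofList (x.drop k))]
        · rw [if_pos]
          apply FreeMonoid.toList.injective
          rw [FreeMonoid.toList_mul]
          simp only [FreeMonoid.toList_ofList]
          exact List.take_append_drop k x
        · intro c hc hcne
          rw [if_neg]
          intro hcontra
          have htl : FreeMonoid.toList (FreeMonoid.ofList (x.take k)) ++ FreeMonoid.toList c = x := by
            have := congrArg FreeMonoid.toList hcontra
            rwa [FreeMonoid.toList_mul, FreeMonoid.toList_ofList] at this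
          rw [FreeMonoid.toList_ofList] at htl
          apply hcne
          apply FreeMonoid.toList.injective
          rw [FreeMonoid.toList_ofList]
          have : x.take k ++ FreeMonoid.toList c = x.take k ++ x.drop k := by
            rw [htl, List.take_append_drop]
          exact List.append_cancel_left this
        · intro hns
          rw [Finsupp.notMem_support_iff.1 hns]
          simp
      · intro b hb hbne
        rw [Finsupp.sum]
        apply Finset.sum_eq_zero
        intro c hc
        rw [if_neg]
        intro hcontra
        exact hbne (split_eq hcontra (hf b (Finsupp.mem_support_iff.1 hb))).1
      · intro hns
        rw [Finsupp.notMem_support_iff.1 hns]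
        rw [Finsupp.sum]
        apply Finset.sum_eq_zero
        intro c hc
        simp
    · have hval : f (FreeMonoid.ofList (x.take k)) * g (FreeMonoid.ofList (x.drop k)) = 0 := by
        rcases not_and_or.1 hmem with h | h
        · rw [Finsupp.notMem_support_iff.1 h, zero_mul]
        · rw [Finsupp.notMem_support_iff.1 h, mul_zero]
      rw [hval]
      apply Finset.sum_eq_zero
      intro b hb
      rw [Finsupp.sum]
      apply Finset.sum_eq_zero
      intro c hc
      rw [if_neg]
      intro hcontra
      obtain ⟨hb', hc', _⟩ := split_eq hcontra (hf b (Finsupp.mem_support_iff.1 hb))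
      exact hmem ⟨hb' ▸ hb, hc' ▸ hc⟩
  · rw [if_neg hx]
    rw [Finsupp.sum]
    apply Finset.sum_eq_zero
    intro b hb
    rw [Finsupp.sum]
    apply Finset.sum_eq_zero
    intro c hc
    rw [if_neg]
    intro hcontra
    apply hx
    obtain ⟨_, _, hlen⟩ := split_eq hcontra (hf b (Finsupp.mem_support_iff.1 hb))
    rw [hlen, hg c (Finsupp.mem_support_iff.1 hc)]

/-- triangularity property -/
def Tri (w : List α) (f : MonoidAlgebra ℤ (FreeMonoid α)) : Prop :=
  f (FreeMonoid.ofList w) = 1 ∧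
    ∀ v : List α, f (FreeMonoid.ofList v) ≠ 0 → v.length = w.length ∧ w ≤ v

theorem Tri.suppLen {w : List α} {f : MonoidAlgebra ℤ (FreeMonoid α)} (h : Tri w f) :
    SuppLen w.length f := by
  intro m hm
  have := h.2 (FreeMonoid.toList m) (by rwa [FreeMonoid.ofList_toList])
  exact this.1

theorem tri_aux : ∀ N : ℕ, ∀ w : List α, w.length ≤ N → IsLyndon w → Tri w (psi (mu w)) := by
  classical
  intro N
  induction N with
  | zero => intro w hw hly; exact absurd (List.length_eq_zero_iff.1 (Nat.le_zero.1 hw)) hly.1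
  | succ N ih =>
    intro w hwN hly
    rcases lt_or_ge w.length 2 with hl | hl
    · -- single letter
      have h1 : w.length = 1 := by
        have := List.length_pos_iff.2 hly.1; omega
      obtain ⟨i, rfl⟩ := List.length_eq_one_iff.1 h1
      rw [mu_single, psi_of]
      constructor
      · have : FreeMonoid.ofList [i] = FreeMonoid.of i := rfl
        rw [this, MonoidAlgebra.single_apply, if_pos rfl]
      · intro v hv
        rw [MonoidAlgebra.single_apply] at hv
        split_ifs at hv with hh
        · have := congrArg FreeMonoid.toList hh
          rw [FreeMonoid.toList_of, FreeMonoid.toList_ofList] at this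
          rw [← this]
          exact ⟨rfl, le_refl _⟩
        · simp at hv
    · -- composite
      obtain ⟨u₁, u₂, hfac, hly₁, hly₂, hlt, hmu⟩ :
          ∃ u₁ u₂ : List α, u₁ ++ u₂ = w ∧ IsLyndon u₁ ∧ IsLyndon u₂ ∧ u₁ < u₂ ∧
            mu w = ⁅mu u₁, mu u₂⁆ :=
        ⟨lfac w, mps w, lfac_append_mps hl, hly.lfac_isLyndon hl, hly.mps_isLyndon hl,
          hly.lfac_lt_mps hl, mu_eq hl⟩
      have hpos₁ := List.length_pos_iff.2 hly₁.1
      have hpos₂ := List.length_pos_iff.2 hly₂.1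
      have hlenfac : u₁.length + u₂.length = w.length := by
        have := congrArg List.length hfac
        simpa [List.length_append] using this
      have hl₂ : u₂.length < w.length := by omega
      have hl₁ : u₁.length < w.length := by omega
      have ih₁ := ih u₁ (by omega) hly₁
      have ih₂ := ih u₂ (by omega) hly₂
      have hsl₁ := ih₁.suppLen
      have hsl₂ := ih₂.suppLen
      have hpsi : psi (mu w) = psi (mu u₁) * psi (mu u₂) - psi (mu u₂) * psi (mu u₁) := by
        rw [hmu, LieHom.map_lie, Ring.lie_def]
      have hlen : w.length = u₁.length + u₂.length := by
        rw [← hfac, List.length_append]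
      constructor
      · rw [hpsi, MonoidAlgebra.coeff_sub, Finsupp.sub_apply]
        have e₁ : (psi (mu u₁) * psi (mu u₂)) (FreeMonoid.ofList w) = 1 := by
          rw [mul_apply_suppLen hsl₁ hsl₂, if_pos (by omega)]
          have ht : w.take u₁.length = u₁ := by rw [← hfac, List.take_left]
          have hd : w.drop u₁.length = u₂ := by rw [← hfac, List.drop_left]
          rw [ht, hd, ih₁.1, ih₂.1, one_mul]
        have e₂ : (psi (mu u₂) * psi (mu u₁)) (FreeMonoid.ofList w) = 0 := by
          rw [mul_apply_suppLen hsl₂ hsl₁, if_pos (by omega)]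
          by_contra hne
          have h₂ := ih₂.2 (w.take u₂.length) (fun hzero => hne (by rw [hzero, zero_mul]))
          have h₁ := ih₁.2 (w.drop u₂.length) (fun hzero => hne (by rw [hzero, mul_zero]))
          have hge : u₂ ++ u₁ ≤ w.take u₂.length ++ w.drop u₂.length :=
            append_le_append h₂.2 h₂.1.symm h₁.2
          rw [List.take_append_drop] at hge
          have hx : w < u₂ ++ u₁ := by
            rw [← hfac]; exact append_exchange hly₁ hly₂ hlt
          exact absurd (lt_of_lt_of_le hx hge) (lt_irrefl w)
        rw [e₁, e₂, sub_zero]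
      · intro v hv
        rw [hpsi, MonoidAlgebra.coeff_sub, Finsupp.sub_apply] at hv
        have hcases : (psi (mu u₁) * psi (mu u₂)) (FreeMonoid.ofList v) ≠ 0 ∨
            (psi (mu u₂) * psi (mu u₁)) (FreeMonoid.ofList v) ≠ 0 := by
          by_contra hno
          push_neg at hno
          rw [hno.1, hno.2, sub_zero] at hv
          exact hv rfl
        rcases hcases with h | h
        · rw [mul_apply_suppLen hsl₁ hsl₂] at h
          split_ifs at h with hvl
          · have h₁ := ih₁.2 (v.take u₁.length) (fun hzero => h (by rw [hzero, zero_mul]))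
            have h₂ := ih₂.2 (v.drop u₁.length) (fun hzero => h (by rw [hzero, mul_zero]))
            refine ⟨by omega, ?_⟩
            have : u₁ ++ u₂ ≤ v.take u₁.length ++ v.drop u₁.length :=
              append_le_append h₁.2 h₁.1.symm h₂.2
            rw [List.take_append_drop, hfac] at this
            exact this
          · exact absurd rfl h
        · rw [mul_apply_suppLen hsl₂ hsl₁] at h
          split_ifs at h with hvl
          · have h₂ := ih₂.2 (v.take u₂.length) (fun hzero => h (by rw [hzero, zero_mul]))
            have h₁ := ih₁.2 (v.drop u₂.length) (fun hzero => h (by rw [hzero, mul_zero]))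
            refine ⟨by omega, ?_⟩
            have hge : u₂ ++ u₁ ≤ v.take u₂.length ++ v.drop u₂.length :=
              append_le_append h₂.2 h₂.1.symm h₁.2
            rw [List.take_append_drop] at hge
            have hx : w < u₂ ++ u₁ := by
              rw [← hfac]; exact append_exchange hly₁ hly₂ hlt
            exact le_of_lt (lt_of_lt_of_le hx hge)
          · exact absurd rfl h

theorem tri {w : List α} (hly : IsLyndon w) : Tri w (psi (mu w)) :=
  tri_aux w.length w (le_refl _) hly



/-- numeric encoding of bounded-length words, monotone for lex -/
def code (n : ℕ) : ℕ → List (Fin n) → ℕ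
  | _, [] => 0
  | N, (i :: t) => ((i : ℕ) + 1) * (n+1)^(N-1) + code n (N-1) t

theorem code_lt_pow (n : ℕ) : ∀ (w : List (Fin n)) (N : ℕ), w.length ≤ N → code n N w < (n+1)^N := by
  intro w
  induction w with
  | nil => intro N _; rw [code]; exact pow_pos (by omega) N
  | cons i t ih =>
    intro N hN
    simp only [List.length_cons] at hN
    have hN1 : 1 ≤ N := by omega
    have iht := ih (N-1) (by omega)
    rw [code]
    have hi : (i : ℕ) + 2 ≤ n + 1 := by have := i.isLt; omega
    calc ((i : ℕ) + 1) * (n+1)^(N-1) + code n (N-1) t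
        < ((i : ℕ) + 1) * (n+1)^(N-1) + (n+1)^(N-1) := by omega
      _ = ((i : ℕ) + 2) * (n+1)^(N-1) := by ring
      _ ≤ (n+1) * (n+1)^(N-1) := Nat.mul_le_mul_right _ hi
      _ = (n+1)^N := by
          rw [← pow_succ']
          congr 1
          omega

theorem code_lt_code (n : ℕ) : ∀ {x y : List (Fin n)}, List.Lex (· < ·) x y →
    ∀ N, x.length ≤ N → y.length ≤ N → code n N x < code n N y := by
  intro x y h
  induction h with
  | @nil b l =>
    intro N _ hy
    rw [code, code]
    have h1 : 0 < ((b : ℕ)+1) * (n+1)^(N-1) := Nat.mul_pos (by omega) (pow_pos (by omega) _)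
    omega
  | @rel a l₁ b l₂ hab =>
    intro N hx hy
    rw [code, code]
    simp only [List.length_cons] at hx hy
    have h₁ := code_lt_pow n l₁ (N-1) (by omega)
    have hab' : (a : ℕ) < (b : ℕ) := hab
    calc ((a:ℕ)+1) * (n+1)^(N-1) + code n (N-1) l₁
        < ((a:ℕ)+1) * (n+1)^(N-1) + (n+1)^(N-1) := by omega
      _ = ((a:ℕ)+2) * (n+1)^(N-1) := by ring
      _ ≤ ((b:ℕ)+1) * (n+1)^(N-1) := Nat.mul_le_mul_right _ (by omega)
      _ ≤ ((b:ℕ)+1) * (n+1)^(N-1) + code n (N-1) l₂ := Nat.le_add_right _ _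
  | @cons a l₁ l₂ h ih =>
    intro N hx hy
    rw [code, code]
    simp only [List.length_cons] at hx hy
    exact Nat.add_lt_add_left (ih (N-1) (by omega) (by omega)) _

/-- helper: bracketing on the left maps a span into a span -/
theorem lie_mem_span_of {α : Type*} [LinearOrder α] (x : FreeLieAlgebra ℤ α)
    {T S : Set (FreeLieAlgebra ℤ α)}
    (h : ∀ t ∈ T, ⁅x, t⁆ ∈ Submodule.span ℤ S) {z : FreeLieAlgebra ℤ α}
    (hz : z ∈ Submodule.span ℤ T) :
    ⁅x, z⁆ ∈ Submodule.span ℤ S := by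
  induction hz using Submodule.span_induction with
  | mem t ht => exact h t ht
  | zero => rw [lie_zero]; exact Submodule.zero_mem _
  | add a b _ _ ha hb => rw [lie_add]; exact Submodule.add_mem _ ha hb
  | smul r a _ ha => rw [lie_smul]; exact Submodule.smul_mem _ r ha

theorem lie_mem_span_of' {α : Type*} [LinearOrder α] (x : FreeLieAlgebra ℤ α)
    {T S : Set (FreeLieAlgebra ℤ α)}
    (h : ∀ t ∈ T, ⁅t, x⁆ ∈ Submodule.span ℤ S) {z : FreeLieAlgebra ℤ α}
    (hz : z ∈ Submodule.span ℤ T) :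
    ⁅z, x⁆ ∈ Submodule.span ℤ S := by
  induction hz using Submodule.span_induction with
  | mem t ht => exact h t ht
  | zero => rw [zero_lie]; exact Submodule.zero_mem _
  | add a b _ _ ha hb => rw [add_lie]; exact Submodule.add_mem _ ha hb
  | smul r a _ ha => rw [smul_lie]; exact Submodule.smul_mem _ r ha

theorem span_bracket (n : ℕ) :
    ∀ N c : ℕ, ∀ u v : List (Fin n), IsLyndon u → IsLyndon v → u < v →
      u.length + v.length = N → code n N v = c →
      ⁅mu u, mu v⁆ ∈ Submodule.span ℤ
        {z | ∃ w : List (Fin n), IsLyndon w ∧ w.length = u.length + v.length ∧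
          u ++ v ≤ w ∧ w < v ∧ z = mu w} := by
  intro N
  induction N using Nat.strong_induction_on with
  | _ N ihN =>
  intro c
  induction c using Nat.strong_induction_on with
  | _ c ihc =>
  intro u v hlyu hlyv huv hN hc
  have hposu := List.length_pos_iff.2 hlyu.1
  have hposv := List.length_pos_iff.2 hlyv.1
  by_cases hstd : u.length = 1 ∨ v ≤ mps u
  · -- standard case
    have h2 : 2 ≤ (u ++ v).length := by simp only [List.length_append]; omega
    have hmps : mps (u ++ v) = v := mps_append_eq hlyu hlyv huv hstd
    have hlfac : lfac (u ++ v) = u := by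
      have h3 : lfac (u ++ v) ++ mps (u ++ v) = u ++ v := lfac_append_mps h2
      rw [hmps] at h3
      have h4 := congrArg (List.take u.length) h3
      have h5 : (lfac (u++v)).length = u.length := by
        have := congrArg List.length h3
        simp only [List.length_append] at this
        omega
      rw [← h5, List.take_left, h5, List.take_left] at h4
      exact h4
    have hmuw : mu (u ++ v) = ⁅mu u, mu v⁆ := by
      rw [mu_eq h2, hlfac, hmps]
    apply Submodule.subset_span
    exact ⟨u ++ v, hlyu.append hlyv huv, by simp [List.length_append],
      le_refl _, append_lt_right hlyu hlyv huv, hmuw.symm⟩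
  · -- non-standard case
    push_neg at hstd
    obtain ⟨hne1, hvgt⟩ := hstd
    have hvgt' : mps u < v := hvgt
    have hu2 : 2 ≤ u.length := by omega
    obtain ⟨u₁, u₂, hfacu, hly₁, hly₂, h12, hu₂v, huu₂, hmuu⟩ :
        ∃ u₁ u₂ : List (Fin n), u₁ ++ u₂ = u ∧ IsLyndon u₁ ∧ IsLyndon u₂ ∧ u₁ < u₂ ∧
          u₂ < v ∧ u < u₂ ∧ mu u = ⁅mu u₁, mu u₂⁆ :=
      ⟨lfac u, mps u, lfac_append_mps hu2, hlyu.lfac_isLyndon hu2, hlyu.mps_isLyndon hu2,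
        hlyu.lfac_lt_mps hu2, hvgt', hlyu.lt_mps hu2, mu_eq hu2⟩
    have hpos₁ := List.length_pos_iff.2 hly₁.1
    have hpos₂ := List.length_pos_iff.2 hly₂.1
    have hlen12 : u₁.length + u₂.length = u.length := by
      have := congrArg List.length hfacu
      simpa [List.length_append] using this
    have hu₂lenu : u₂.length < u.length := by omega
    -- Jacobi rearrangement
    have hjac : ⁅mu u, mu v⁆ =
        ⁅mu u₁, ⁅mu u₂, mu v⁆⁆ + ⁅⁅mu u₁, mu v⁆, mu u₂⁆ := by
      rw [hmuu]
      have h1 := leibniz_lie (mu u₁) (mu u₂) (mu v)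
      have h2 : ⁅⁅mu u₁, mu v⁆, mu u₂⁆ = -⁅mu u₂, ⁅mu u₁, mu v⁆⁆ := by
        rw [← lie_skew]
      rw [h2]
      rw [h1]
      abel
    rw [hjac, hN]
    refine Submodule.add_mem _ ?_ ?_
    · -- part B : ⁅mu u₁, ⁅mu u₂, mu v⁆⁆
      have hinner := ihN (u₂.length + v.length) (by omega) (code n (u₂.length + v.length) v)
        u₂ v hly₂ hlyv hu₂v rfl rfl
      refine lie_mem_span_of (mu u₁) ?_ hinner
      rintro t ⟨w', hw'ly, hw'len, hw'lo, hw'hi, rfl⟩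
      have hu₁w' : u₁ < w' :=
        lt_of_lt_of_le (lt_trans h12 (lt_append_self u₂ hlyv.1)) hw'lo
      have hsum : u₁.length + w'.length = N := by omega
      have houter := ihc (code n N w') (by
          rw [← hc]
          exact code_lt_code n hw'hi N (by omega) (by omega))
        u₁ w' hly₁ hw'ly hu₁w' hsum rfl
      refine Submodule.span_le.2 ?_ houter
      rintro z ⟨ω, hωly, hωlen, hωlo, hωhi, rfl⟩
      apply Submodule.subset_span
      refine ⟨ω, hωly, by omega, ?_, lt_trans hωhi hw'hi, rfl⟩
      calc u ++ v = u₁ ++ (u₂ ++ v) := by rw [← hfacu, List.append_assoc]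
        _ ≤ u₁ ++ w' := append_le_append_left u₁ hw'lo
        _ ≤ ω := hωlo
    · -- part A : ⁅⁅mu u₁, mu v⁆, mu u₂⁆
      have hu₁v : u₁ < v := lt_trans h12 hu₂v
      have hinner := ihN (u₁.length + v.length) (by omega) (code n (u₁.length + v.length) v)
        u₁ v hly₁ hlyv hu₁v rfl rfl
      refine lie_mem_span_of' (mu u₂) ?_ hinner
      rintro t ⟨w'', hw''ly, hw''len, hw''lo, hw''hi, rfl⟩
      rcases lt_trichotomy w'' u₂ with hlt | heq | hgt
      · -- w'' < u₂
        have hsum : w''.length + u₂.length = N := by omega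
        have houter := ihc (code n N u₂) (by
            rw [← hc]
            exact code_lt_code n hu₂v N (by omega) (by omega))
          w'' u₂ hw''ly hly₂ hlt hsum rfl
        refine Submodule.span_le.2 ?_ houter
        rintro z ⟨ω, hωly, hωlen, hωlo, hωhi, rfl⟩
        apply Submodule.subset_span
        refine ⟨ω, hωly, by omega, ?_, lt_trans hωhi hu₂v, rfl⟩
        have hstep1 : u ++ v < (u₁ ++ v) ++ u₂ := by
          have hx : u₂ ++ v < v ++ u₂ := append_exchange hly₂ hlyv hu₂v
          calc u ++ v = u₁ ++ (u₂ ++ v) := by rw [← hfacu, List.append_assoc]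
            _ < u₁ ++ (v ++ u₂) := append_lt_append_left u₁ hx
            _ = (u₁ ++ v) ++ u₂ := by rw [List.append_assoc]
        have hstep2 : (u₁ ++ v) ++ u₂ ≤ w'' ++ u₂ :=
          append_le_append hw''lo (by simp [List.length_append]; omega) (le_refl u₂)
        exact le_of_lt (lt_of_lt_of_le (lt_of_lt_of_le hstep1 hstep2) hωlo)
      · -- w'' = u₂ : bracket is zero
        rw [heq, lie_self]
        exact Submodule.zero_mem _
      · -- u₂ < w''
        have hsum : u₂.length + w''.length = N := by omega
        have houter := ihc (code n N w'') (by
            rw [← hc]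
            exact code_lt_code n hw''hi N (by omega) (by omega))
          u₂ w'' hly₂ hw''ly hgt hsum rfl
        have hneg : ⁅mu w'', mu u₂⁆ = -⁅mu u₂, mu w''⁆ := by rw [← lie_skew]
        rw [hneg]
        refine Submodule.neg_mem _ ?_
        refine Submodule.span_le.2 ?_ houter
        rintro z ⟨ω, hωly, hωlen, hωlo, hωhi, rfl⟩
        apply Submodule.subset_span
        refine ⟨ω, hωly, by omega, ?_, lt_trans hωhi hw''hi, rfl⟩
        have : u ++ v < u₂ ++ w'' :=
          append_lt_append_of_lt_of_length_le huu₂ (le_of_lt hu₂lenu) v w''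
        exact le_of_lt (lt_of_lt_of_le this hωlo)


theorem span_bracket' {n : ℕ} {u v : List (Fin n)} (hu : IsLyndon u) (hv : IsLyndon v)
    (huv : u < v) :
    ⁅mu u, mu v⁆ ∈ Submodule.span ℤ
      {z | ∃ w : List (Fin n), IsLyndon w ∧ w.length = u.length + v.length ∧
        u ++ v ≤ w ∧ w < v ∧ z = mu w} :=
  span_bracket n (u.length + v.length) (code n (u.length + v.length) v) u v hu hv huv rfl rfl

theorem muw_cases {w : List α} (h : IsLyndon w) :
    (∃ i, w = [i]) ∨ ∃ p q : List α, mu w = ⁅mu p, mu q⁆ := by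
  rcases lt_or_ge w.length 2 with h1 | h1
  · left
    have hpos := List.length_pos_iff.2 h.1
    have h2 : w.length = 1 := by omega
    exact List.length_eq_one_iff.1 h2
  · right
    exact ⟨lfac w, mps w, mu_eq h1⟩


/-- the free Lie algebra is generated as a Lie algebra by the generators -/
theorem lieSpan_top (α : Type*) [LinearOrder α] :
    LieSubalgebra.lieSpan ℤ (FreeLieAlgebra ℤ α) (Set.range (FreeLieAlgebra.of ℤ)) = ⊤ := by
  set K := LieSubalgebra.lieSpan ℤ (FreeLieAlgebra ℤ α) (Set.range (FreeLieAlgebra.of ℤ)) with hK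
  let g : FreeLieAlgebra ℤ α →ₗ⁅ℤ⁆ K :=
    FreeLieAlgebra.lift ℤ (fun i =>
      (⟨FreeLieAlgebra.of ℤ i, LieSubalgebra.subset_lieSpan (Set.mem_range_self i)⟩ : K))
  have key : K.incl.comp g = LieHom.id := by
    apply FreeLieAlgebra.hom_ext
    intro i
    show K.incl (g (FreeLieAlgebra.of ℤ i)) = FreeLieAlgebra.of ℤ i
    have : g (FreeLieAlgebra.of ℤ i) =
        ⟨FreeLieAlgebra.of ℤ i, LieSubalgebra.subset_lieSpan (Set.mem_range_self i)⟩ :=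
      FreeLieAlgebra.lift_of_apply _ i
    rw [this]
    rfl
  rw [eq_top_iff]
  intro z _
  have h2 : K.incl (g z) = z := by
    have h3 := DFunLike.congr_fun key z
    simpa using h3
  rw [← h2]
  exact (g z).2

/-- the set of Lyndon bracket monomials -/
def LyMu (n : ℕ) : Set (FreeLieAlgebra ℤ (Fin n)) :=
  {z | ∃ w : List (Fin n), IsLyndon w ∧ z = mu w}

theorem pair_mem {n : ℕ} {u v : List (Fin n)} (hu : IsLyndon u) (hv : IsLyndon v) :
    ⁅mu u, mu v⁆ ∈ Submodule.span ℤ (LyMu n) := by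
  rcases lt_trichotomy u v with h | h | h
  · refine Submodule.span_le.2 ?_ (span_bracket' hu hv h)
    rintro z ⟨w, hw, _, _, _, rfl⟩
    exact Submodule.subset_span ⟨w, hw, rfl⟩
  · rw [h, lie_self]
    exact Submodule.zero_mem _
  · have : ⁅mu u, mu v⁆ = -⁅mu v, mu u⁆ := by rw [← lie_skew]
    rw [this]
    refine Submodule.neg_mem _ ?_
    refine Submodule.span_le.2 ?_ (span_bracket' hv hu h)
    rintro z ⟨w, hw, _, _, _, rfl⟩
    exact Submodule.subset_span ⟨w, hw, rfl⟩

theorem muSpan_top (n : ℕ) : Submodule.span ℤ (LyMu n) = ⊤ := by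
  set S := Submodule.span ℤ (LyMu n) with hS
  have hclosed : ∀ x ∈ S, ∀ y ∈ S, ⁅x, y⁆ ∈ S := by
    intro x hx y hy
    refine lie_mem_span_of' y ?_ hx
    rintro t ⟨u, hu, rfl⟩
    refine lie_mem_span_of (mu u) ?_ hy
    rintro t' ⟨v, hv, rfl⟩
    exact pair_mem hu hv
  let K : LieSubalgebra ℤ (FreeLieAlgebra ℤ (Fin n)) :=
    { S with lie_mem' := fun {x y} hx hy => hclosed x hx y hy }
  have hle : LieSubalgebra.lieSpan ℤ (FreeLieAlgebra ℤ (Fin n))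
      (Set.range (FreeLieAlgebra.of ℤ)) ≤ K := by
    rw [LieSubalgebra.lieSpan_le]
    rintro z ⟨i, rfl⟩
    exact Submodule.subset_span ⟨[i], isLyndon_singleton i, (mu_single i).symm⟩
  rw [lieSpan_top (Fin n)] at hle
  rw [eq_top_iff]
  intro z _
  exact hle (LieSubalgebra.mem_top z)

/-- every element is an integer combination of Lyndon monomials -/
theorem mem_muSpan {n : ℕ} (z : FreeLieAlgebra ℤ (Fin n)) :
    ∃ l : List (Fin n) →₀ ℤ, (∀ w ∈ l.support, IsLyndon w) ∧
      (l.sum fun w c => c • mu w) = z := by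
  have hz : z ∈ Submodule.span ℤ (mu '' {w : List (Fin n) | IsLyndon w}) := by
    have : (mu '' {w : List (Fin n) | IsLyndon w}) = LyMu n := by
      ext x
      constructor
      · rintro ⟨w, hw, rfl⟩; exact ⟨w, hw, rfl⟩
      · rintro ⟨w, hw, rfl⟩; exact ⟨w, hw, rfl⟩
    rw [this, muSpan_top n]
    trivial
  rw [Finsupp.mem_span_image_iff_linearCombination] at hz
  obtain ⟨l, hl, hrep⟩ := hz
  refine ⟨l, ?_, ?_⟩
  · intro w hw
    exact hl hw
  · rw [← hrep, Finsupp.linearCombination_apply]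

/-- injectivity of `psi` -/
theorem psi_injective {n : ℕ} (z : FreeLieAlgebra ℤ (Fin n)) (h : psi z = 0) : z = 0 := by
  classical
  obtain ⟨l, hly, hrep⟩ := mem_muSpan z
  by_cases hl0 : l = 0
  · rw [← hrep, hl0, Finsupp.sum_zero_index]
  · exfalso
    obtain ⟨w₁, hw₁⟩ : ∃ w, w ∈ l.support := by
      rcases Finset.eq_empty_or_nonempty l.support with he | ⟨w, hw⟩
      · exact absurd (Finsupp.support_eq_empty.1 he) hl0
      · exact ⟨w, hw⟩
    set F := l.support.filter (fun w => w.length = w₁.length) with hF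
    have hFne : F.Nonempty := ⟨w₁, Finset.mem_filter.2 ⟨hw₁, rfl⟩⟩
    set w₀ := F.min' hFne with hw₀def
    have hw₀F : w₀ ∈ F := F.min'_mem hFne
    have hw₀supp : w₀ ∈ l.support := (Finset.mem_filter.1 hw₀F).1
    have hw₀len : w₀.length = w₁.length := (Finset.mem_filter.1 hw₀F).2
    -- evaluate the coefficient of w₀
    have hexp : psi z = ∑ w ∈ l.support, l w • psi (mu w) := by
      conv_lhs => rw [← hrep, Finsupp.sum]
      rw [← LieHom.coe_toLinearMap, map_sum]
      refine Finset.sum_congr rfl ?_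
      intro w _
      simp
    have hcoeff : (∑ w ∈ l.support, l w • psi (mu w)) (FreeMonoid.ofList w₀) = 0 := by
      rw [← hexp, h]; rfl
    rw [MonoidAlgebra.coeff_sum, Finsupp.finset_sum_apply] at hcoeff
    have hterm : ∀ w ∈ l.support, (l w • psi (mu w)) (FreeMonoid.ofList w₀) =
        if w = w₀ then l w₀ else 0 := by
      intro w hw
      rw [MonoidAlgebra.coeff_smul_apply]
      split_ifs with heq
      · rw [heq, (tri (hly w₀ hw₀supp)).1]
        simp
      · by_cases hzero : (psi (mu w)) (FreeMonoid.ofList w₀) = 0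
        · rw [hzero, smul_zero]
        · exfalso
          have h2 := (tri (hly w hw)).2 w₀ hzero
          have hwF : w ∈ F := Finset.mem_filter.2 ⟨hw, by omega⟩
          have h3 := F.min'_le w hwF
          exact heq (le_antisymm h2.2 h3)
    rw [Finset.sum_congr rfl hterm] at hcoeff
    rw [Finset.sum_ite_eq' l.support w₀ (fun _ => l w₀)] at hcoeff
    rw [if_pos hw₀supp] at hcoeff
    exact (Finsupp.mem_support_iff.1 hw₀supp) hcoeff



section coeffs
variable {n : ℕ}

theorem ofList_cons_eq (i : Fin n) (v : List (Fin n)) :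
    FreeMonoid.of i * FreeMonoid.ofList v = FreeMonoid.ofList (i :: v) := by
  apply FreeMonoid.toList.injective
  rw [FreeMonoid.toList_mul, FreeMonoid.toList_of, FreeMonoid.toList_ofList,
    FreeMonoid.toList_ofList]
  rfl

theorem single_mul_apply_cons (g : MonoidAlgebra ℤ (FreeMonoid (Fin n))) (j i : Fin n)
    (r : ℤ) (v : List (Fin n)) :
    (MonoidAlgebra.single (FreeMonoid.of j) r * g) (FreeMonoid.ofList (i :: v)) =
      if j = i then r * g (FreeMonoid.ofList v) else 0 := by
  classical
  split_ifs with hji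
  · subst hji
    apply MonoidAlgebra.single_mul_apply_aux
    intro z _
    constructor
    · intro hz
      have := congrArg FreeMonoid.toList hz
      rw [FreeMonoid.toList_mul, FreeMonoid.toList_of, FreeMonoid.toList_ofList] at this
      apply FreeMonoid.toList.injective
      rw [FreeMonoid.toList_ofList]
      simpa using this
    · intro h
      rw [h]
      exact ofList_cons_eq j v
  · rw [MonoidAlgebra.mul_apply]
    rw [MonoidAlgebra.coeff_single, Finsupp.sum_single_index (by simp)]
    rw [Finsupp.sum]
    apply Finset.sum_eq_zero
    intro c _
    rw [if_neg]
    intro hcontra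
    have := congrArg FreeMonoid.toList hcontra
    rw [FreeMonoid.toList_mul, FreeMonoid.toList_of, FreeMonoid.toList_ofList] at this
    have : j = i := by
      have h2 := congrArg (fun l => l.head?) this
      simpa using h2
    exact hji this

theorem mul_single_apply_concat (g : MonoidAlgebra ℤ (FreeMonoid (Fin n))) (j j' : Fin n)
    (r : ℤ) (v : List (Fin n)) :
    (g * MonoidAlgebra.single (FreeMonoid.of j) r) (FreeMonoid.ofList (v ++ [j'])) =
      if j = j' then g (FreeMonoid.ofList v) * r else 0 := by
  classical
  split_ifs with hjj
  · subst hjj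
    apply MonoidAlgebra.mul_single_apply_aux
    intro z _
    constructor
    · intro hz
      have := congrArg FreeMonoid.toList hz
      rw [FreeMonoid.toList_mul, FreeMonoid.toList_of, FreeMonoid.toList_ofList] at this
      apply FreeMonoid.toList.injective
      rw [FreeMonoid.toList_ofList]
      exact List.append_inj_left' this rfl
    · intro h
      rw [h]
      apply FreeMonoid.toList.injective
      rw [FreeMonoid.toList_mul, FreeMonoid.toList_of, FreeMonoid.toList_ofList,
        FreeMonoid.toList_ofList]
  · rw [MonoidAlgebra.mul_apply]
    rw [Finsupp.sum]
    apply Finset.sum_eq_zero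
    intro b _
    rw [MonoidAlgebra.coeff_single, Finsupp.sum_single_index (by simp)]
    rw [if_neg]
    intro hcontra
    have := congrArg FreeMonoid.toList hcontra
    rw [FreeMonoid.toList_mul, FreeMonoid.toList_of, FreeMonoid.toList_ofList] at this
    have h2 : j = j' := by
      have h3 := congrArg (fun l => l.getLast?) this
      simp [List.getLast?_append] at h3
      exact h3
    exact hjj h2

variable (a : Fin n → ℤ)

noncomputable def Uel : MonoidAlgebra ℤ (FreeMonoid (Fin n)) :=
  ∑ i, a i • MonoidAlgebra.single (FreeMonoid.of i) 1

theorem psi_x0 : psi (∑ i, a i • FreeLieAlgebra.of ℤ i) = Uel a := by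
  rw [Uel, ← LieHom.coe_toLinearMap, map_sum]
  refine Finset.sum_congr rfl ?_
  intro i _
  rw [map_smul]
  simp [psi_of]

theorem UP_apply (P : MonoidAlgebra ℤ (FreeMonoid (Fin n))) (i : Fin n) (v : List (Fin n)) :
    (Uel a * P) (FreeMonoid.ofList (i :: v)) = a i * P (FreeMonoid.ofList v) := by
  classical
  rw [Uel, Finset.sum_mul]
  rw [MonoidAlgebra.coeff_sum, Finsupp.finset_sum_apply]
  rw [Finset.sum_eq_single i]
  · rw [smul_mul_assoc, MonoidAlgebra.coeff_smul_apply, single_mul_apply_cons, if_pos rfl, one_mul]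
    rfl
  · intro j _ hji
    rw [smul_mul_assoc, MonoidAlgebra.coeff_smul_apply, single_mul_apply_cons, if_neg hji, smul_zero]
  · intro hni
    exact absurd (Finset.mem_univ i) hni

theorem PU_apply (P : MonoidAlgebra ℤ (FreeMonoid (Fin n))) (v : List (Fin n)) (j : Fin n) :
    (P * Uel a) (FreeMonoid.ofList (v ++ [j])) = P (FreeMonoid.ofList v) * a j := by
  classical
  rw [Uel, Finset.mul_sum]
  rw [MonoidAlgebra.coeff_sum, Finsupp.finset_sum_apply]
  rw [Finset.sum_eq_single j]
  · rw [mul_smul_comm, MonoidAlgebra.coeff_smul_apply, mul_single_apply_concat, if_pos rfl, mul_one]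
    rw [smul_eq_mul, mul_comm]
  · intro i _ hij
    rw [mul_smul_comm, MonoidAlgebra.coeff_smul_apply, mul_single_apply_concat, if_neg hij, smul_zero]
  · intro hni
    exact absurd (Finset.mem_univ j) hni

variable {P : MonoidAlgebra ℤ (FreeMonoid (Fin n))}

theorem Rrel (hcomm : Uel a * P = P * Uel a) (i : Fin n) (w : List (Fin n)) (hw : w ≠ []) :
    a i * P (FreeMonoid.ofList w) =
      a (w.getLast hw) * P (FreeMonoid.ofList (i :: w.dropLast)) := by
  have hdecomp : i :: w = (i :: w.dropLast) ++ [w.getLast hw] := by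
    rw [List.cons_append]
    congr 1
    exact (List.dropLast_append_getLast hw).symm
  have h1 : (Uel a * P) (FreeMonoid.ofList (i :: w)) = a i * P (FreeMonoid.ofList w) :=
    UP_apply a P i w
  have h2 : (P * Uel a) (FreeMonoid.ofList (i :: w)) =
      P (FreeMonoid.ofList (i :: w.dropLast)) * a (w.getLast hw) := by
    rw [hdecomp]
    exact PU_apply a P (i :: w.dropLast) (w.getLast hw)
  rw [← h1, hcomm, h2, mul_comm]

theorem chain (hcomm : Uel a * P = P * Uel a) :
    ∀ (t v : List (Fin n)), t.length ≤ v.length →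
    ((t.map a).prod) * P (FreeMonoid.ofList v) =
      (((v.drop (v.length - t.length)).map a).prod) *
        P (FreeMonoid.ofList (t ++ v.take (v.length - t.length))) := by
  intro t
  induction t with
  | nil => intro v _; simp
  | cons i t' ih =>
    intro v hlen
    simp only [List.length_cons] at hlen
    have hlen' : t'.length ≤ v.length := by omega
    have ih' := ih v hlen'
    set m := v.length - t'.length with hm
    have hm1 : 1 ≤ m := by omega
    have hmv : m ≤ v.length := by omega
    have hm' : v.length - (t'.length + 1) = m - 1 := by omega
    have htake_len : (v.take m).length = m := by
      rw [List.length_take]; omega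
    have htake_ne : v.take m ≠ [] := by
      intro hh; rw [hh] at htake_len; simp at htake_len; omega
    have hword_ne : t' ++ v.take m ≠ [] := by
      intro hh
      rcases List.append_eq_nil_iff.1 hh with ⟨_, h2⟩
      exact htake_ne h2
    have hidx : m - 1 < v.length := by omega
    -- getLast of the word
    have hlast : (t' ++ v.take m).getLast hword_ne = v[m-1] := by
      rw [List.getLast_append_of_ne_nil _ htake_ne, List.getLast_eq_getElem]
      simp only [htake_len]
      exact List.getElem_take
    -- dropLast of the word
    have hdroplast : (t' ++ v.take m).dropLast = t' ++ v.take (m-1) := by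
      rw [List.dropLast_append_of_ne_nil htake_ne]
      congr 1
      rw [List.dropLast_eq_take, htake_len, List.take_take]
      congr 1
      omega
    -- drop decomposition
    have hdropcons : v.drop (m-1) = v[m-1] :: v.drop m := by
      have h4 := List.drop_eq_getElem_cons hidx
      rw [h4]
      congr 2
      omega
    have hR := Rrel a hcomm i (t' ++ v.take m) hword_ne
    rw [hlast, hdroplast] at hR
    calc ((i :: t').map a).prod * P (FreeMonoid.ofList v)
        = a i * ((t'.map a).prod * P (FreeMonoid.ofList v)) := by
          rw [List.map_cons, List.prod_cons, mul_assoc]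
      _ = a i * (((v.drop m).map a).prod * P (FreeMonoid.ofList (t' ++ v.take m))) := by
          rw [ih']
      _ = ((v.drop m).map a).prod * (a i * P (FreeMonoid.ofList (t' ++ v.take m))) := by
          ring
      _ = ((v.drop m).map a).prod *
            (a (v[m-1]) * P (FreeMonoid.ofList (i :: (t' ++ v.take (m-1))))) := by
          rw [hR]
      _ = (((v.drop (m-1)).map a).prod) *
            P (FreeMonoid.ofList ((i :: t') ++ v.take (m-1))) := by
          rw [hdropcons, List.map_cons, List.prod_cons, List.cons_append]
          ring
      _ = (((v.drop (v.length - (t'.length + 1))).map a).prod) *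
            P (FreeMonoid.ofList ((i :: t') ++ v.take (v.length - (t'.length + 1)))) := by
          rw [hm']

theorem chain_eq (hcomm : Uel a * P = P * Uel a) (t v : List (Fin n))
    (hlen : t.length = v.length) :
    ((t.map a).prod) * P (FreeMonoid.ofList v) =
      ((v.map a).prod) * P (FreeMonoid.ofList t) := by
  have := chain a hcomm t v hlen.le
  rw [hlen, Nat.sub_self, List.drop_zero, List.take_zero, List.append_nil] at this
  exact this

end coeffs

section lam
variable {n : ℕ} (a : Fin n → ℤ)
open Polynomial

noncomputable def Fm : FreeMonoid (Fin n) →* Polynomial ℤ :=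
  FreeMonoid.lift (fun i => Polynomial.C (a i) * Polynomial.X)

noncomputable def Lam : MonoidAlgebra ℤ (FreeMonoid (Fin n)) →ₐ[ℤ] Polynomial ℤ :=
  MonoidAlgebra.lift ℤ (Polynomial ℤ) (FreeMonoid (Fin n)) (Fm a)

theorem Fm_apply : ∀ w : List (Fin n),
    Fm a (FreeMonoid.ofList w) = C ((w.map a).prod) * X ^ w.length := by
  intro w
  induction w with
  | nil =>
    have h1 : FreeMonoid.ofList ([] : List (Fin n)) = 1 := rfl
    rw [h1, map_one]
    simp
  | cons i t ih =>
    have h1 : FreeMonoid.ofList (i :: t) = FreeMonoid.of i * FreeMonoid.ofList t :=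
      (ofList_cons_eq i t).symm
    rw [h1, map_mul, ih, Fm, FreeMonoid.lift_eval_of]
    rw [List.map_cons, List.prod_cons, List.length_cons]
    rw [map_mul]
    ring

theorem Lam_psi_mem (z : FreeLieAlgebra ℤ (Fin n)) :
    Lam a (psi z) ∈ Submodule.span ℤ ({Polynomial.X} : Set (Polynomial ℤ)) := by
  obtain ⟨l, hly, hrep⟩ := mem_muSpan z
  have hexp : psi z = ∑ w ∈ l.support, l w • psi (mu w) := by
    conv_lhs => rw [← hrep, Finsupp.sum]
    rw [← LieHom.coe_toLinearMap, map_sum]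
    refine Finset.sum_congr rfl ?_
    intro w _
    simp
  rw [hexp, map_sum]
  refine Submodule.sum_mem _ ?_
  intro w hw
  rw [map_smul]
  refine Submodule.smul_mem _ _ ?_
  rcases muw_cases (hly w hw) with ⟨i, rfl⟩ | ⟨p, q, heq⟩
  · rw [mu_single, psi_of, Lam, MonoidAlgebra.lift_single, one_smul, Fm,
      FreeMonoid.lift_eval_of]
    rw [Submodule.mem_span_singleton]
    exact ⟨a i, (smul_eq_C_mul (a i)).symm ▸ rfl⟩
  · rw [heq, LieHom.map_lie, Ring.lie_def, map_sub, map_mul, map_mul, mul_comm, sub_self]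
    exact Submodule.zero_mem _

theorem coeff_Lam (Q : MonoidAlgebra ℤ (FreeMonoid (Fin n))) (k : ℕ) :
    (Lam a Q).coeff k = ∑ m ∈ Q.coeff.support, Q m *
      (if (FreeMonoid.toList m).length = k then (((FreeMonoid.toList m).map a).prod) else 0) := by
  classical
  rw [Lam, MonoidAlgebra.lift_apply, Finsupp.sum, finset_sum_coeff]
  refine Finset.sum_congr rfl ?_
  intro m _
  rw [coeff_smul]
  have h1 : Fm a m = C (((FreeMonoid.toList m).map a).prod) * X ^ (FreeMonoid.toList m).length := by
    rw [← FreeMonoid.ofList_toList m, Fm_apply]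
    rw [FreeMonoid.toList_ofList]
  rw [h1, coeff_C_mul, coeff_X_pow]
  by_cases hlk : (FreeMonoid.toList m).length = k
  · rw [if_pos hlk, if_pos hlk.symm]
    simp
  · rw [if_neg hlk, if_neg (fun h => hlk h.symm)]
    simp

end lam

section bezout

theorem bezout_finset {ι : Type*} [DecidableEq ι] (s : Finset ι) (b : ι → ℤ) :
    ∃ f : ι → ℤ, ∑ i ∈ s, f i * b i = s.gcd b := by
  induction s using Finset.induction_on with
  | empty => exact ⟨0, by simp⟩
  | @insert i s hi ih =>
    obtain ⟨f, hf⟩ := ih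
    set A := Int.gcdA (b i) (s.gcd b) with hA
    set B := Int.gcdB (b i) (s.gcd b) with hB
    refine ⟨fun j => if j = i then A else B * f j, ?_⟩
    rw [Finset.sum_insert hi]
    dsimp only
    rw [if_pos rfl]
    have hrest : ∑ j ∈ s, (if j = i then A else B * f j) * b j = B * ∑ j ∈ s, f j * b j := by
      rw [Finset.mul_sum]
      refine Finset.sum_congr rfl ?_
      intro j hj
      rw [if_neg (by rintro rfl; exact hi hj)]
      ring
    rw [hrest, hf, Finset.gcd_insert]
    have h2 : (↑(Int.gcd (b i) (s.gcd b)) : ℤ) = GCDMonoid.gcd (b i) (s.gcd b) :=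
      Int.coe_gcd _ _
    rw [← h2, Int.gcd_eq_gcd_ab]
    ring

end bezout

section mainproof
variable {n : ℕ} {a : Fin n → ℤ} {P : MonoidAlgebra ℤ (FreeMonoid (Fin n))}
open Polynomial

theorem Pk_zero (hcomm : Uel a * P = P * Uel a) (hLmem : Lam a P ∈ Submodule.span ℤ ({X} : Set ℤ[X]))
    (hex : ∃ i, a i ≠ 0) (w₀ : List (Fin n)) (hk : w₀.length ≠ 1) :
    P (FreeMonoid.ofList w₀) = 0 := by
  classical
  by_contra hP0
  obtain ⟨i, hai⟩ := hex
  set k := w₀.length with hkdef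
  -- the coefficient sum vanishes in degree k
  obtain ⟨c, hc⟩ := Submodule.mem_span_singleton.1 hLmem
  have hcoeffzero : (Lam a P).coeff k = 0 := by
    rw [← hc, coeff_smul, coeff_X, if_neg (fun h => hk h.symm)]
    simp
  rw [coeff_Lam] at hcoeffzero
  have hsum : ∑ m ∈ P.coeff.support.filter (fun m => (FreeMonoid.toList m).length = k),
      P m * ((FreeMonoid.toList m).map a).prod = 0 := by
    rw [Finset.sum_filter]
    calc (∑ m ∈ P.coeff.support, if (FreeMonoid.toList m).length = k then
            P m * ((FreeMonoid.toList m).map a).prod else 0)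
        = ∑ m ∈ P.coeff.support, P m *
            (if (FreeMonoid.toList m).length = k then ((FreeMonoid.toList m).map a).prod else 0) := by
          refine Finset.sum_congr rfl ?_
          intro m _
          by_cases hm : (FreeMonoid.toList m).length = k
          · rw [if_pos hm, if_pos hm]
          · rw [if_neg hm, if_neg hm, mul_zero]
      _ = 0 := hcoeffzero
  -- pairwise exchange relation
  have hpair : ∀ m ∈ P.coeff.support.filter (fun m => (FreeMonoid.toList m).length = k),
      ((FreeMonoid.toList m).map a).prod * P (FreeMonoid.ofList w₀) =
        ((w₀.map a).prod) * P m := by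
    intro m hm
    have hlen : (FreeMonoid.toList m).length = k := (Finset.mem_filter.1 hm).2
    have := chain_eq a hcomm (FreeMonoid.toList m) w₀ (by rw [hlen])
    rwa [FreeMonoid.ofList_toList] at this
  -- the base product is nonzero
  have hprodw₀ : (w₀.map a).prod ≠ 0 := by
    intro hzero
    have hrep := chain_eq a hcomm (List.replicate k i) w₀ (by simp [hkdef])
    rw [List.map_replicate, List.prod_replicate, hzero, zero_mul] at hrep
    have : a i ^ k * P (FreeMonoid.ofList w₀) ≠ 0 :=
      mul_ne_zero (pow_ne_zero _ hai) hP0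
    exact this hrep
  -- multiply the sum by P w₀
  have hsq : (w₀.map a).prod * (∑ m ∈ P.coeff.support.filter (fun m => (FreeMonoid.toList m).length = k),
      (P m)^2) = 0 := by
    have h3 : P (FreeMonoid.ofList w₀) *
        (∑ m ∈ P.coeff.support.filter (fun m => (FreeMonoid.toList m).length = k),
          P m * ((FreeMonoid.toList m).map a).prod) = 0 := by
      rw [hsum, mul_zero]
    rw [Finset.mul_sum] at h3
    rw [Finset.mul_sum]
    rw [← h3]
    refine Finset.sum_congr rfl ?_
    intro m hm
    have h4 := hpair m hm
    calc (w₀.map a).prod * (P m)^2 = (((FreeMonoid.toList m).map a).prod *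
            P (FreeMonoid.ofList w₀)) * P m := by rw [h4]; ring
      _ = P (FreeMonoid.ofList w₀) * (P m * ((FreeMonoid.toList m).map a).prod) := by ring
  have hsq0 : ∑ m ∈ P.coeff.support.filter (fun m => (FreeMonoid.toList m).length = k),
      (P m)^2 = 0 := by
    rcases mul_eq_zero.1 hsq with h | h
    · exact absurd h hprodw₀
    · exact h
  have hallzero := (Finset.sum_eq_zero_iff_of_nonneg (fun m _ => sq_nonneg (P m))).1 hsq0
  by_cases hmem : FreeMonoid.ofList w₀ ∈ P.coeff.support
  · have := hallzero (FreeMonoid.ofList w₀)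
      (Finset.mem_filter.2 ⟨hmem, by rw [FreeMonoid.toList_ofList]⟩)
    exact hP0 (pow_eq_zero_iff (two_ne_zero) |>.1 this)
  · exact hP0 (Finsupp.notMem_support_iff.1 hmem)

theorem Uel_apply_single (j : Fin n) : Uel a (FreeMonoid.ofList [j]) = a j := by
  classical
  rw [Uel, MonoidAlgebra.coeff_sum, Finsupp.finset_sum_apply]
  rw [Finset.sum_eq_single j]
  · have hj : FreeMonoid.of j = FreeMonoid.ofList [j] := rfl
    rw [MonoidAlgebra.coeff_smul_apply, MonoidAlgebra.single_apply, if_pos hj]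
    simp
  · intro i _ hij
    have hne : FreeMonoid.of i ≠ FreeMonoid.ofList [j] := by
      intro hcontra
      have := congrArg FreeMonoid.toList hcontra
      rw [FreeMonoid.toList_of, FreeMonoid.toList_ofList] at this
      exact hij (by injection this)
    rw [MonoidAlgebra.coeff_smul_apply, MonoidAlgebra.single_apply, if_neg hne, smul_zero]
  · intro hni
    exact absurd (Finset.mem_univ j) hni

theorem Uel_apply_ne (m' : FreeMonoid (Fin n)) (h : (FreeMonoid.toList m').length ≠ 1) :
    Uel a m' = 0 := by
  classical
  rw [Uel, MonoidAlgebra.coeff_sum, Finsupp.finset_sum_apply]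
  apply Finset.sum_eq_zero
  intro i _
  have hne : FreeMonoid.of i ≠ m' := by
    intro hcontra
    apply h
    rw [← hcontra, FreeMonoid.toList_of]
    rfl
  rw [MonoidAlgebra.coeff_smul_apply, MonoidAlgebra.single_apply, if_neg hne, smul_zero]

theorem main_statement (hn : 1 ≤ n)
    (hgcd : Finset.univ.gcd a = 1) (d : ℤ) (hd : d ≠ 0)
    (y : FreeLieAlgebra ℤ (Fin n)) :
    ⁅y, d • ∑ i : Fin n, a i • FreeLieAlgebra.of ℤ i⁆ = 0 ↔
      ∃ m : ℤ, y = m • ∑ i : Fin n, a i • FreeLieAlgebra.of ℤ i := by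
  classical
  set x₀ := ∑ i : Fin n, a i • FreeLieAlgebra.of ℤ i with hx₀
  constructor
  · intro h
    set P := psi y with hP
    have hU : psi x₀ = Uel a := psi_x0 a
    have h1 : psi ⁅y, d • x₀⁆ = 0 := by rw [h, map_zero]
    rw [LieHom.map_lie, map_smul, hU, ← hP] at h1
    have h3 : Uel a * P = P * Uel a := by
      have h4 : P * (d • Uel a) - (d • Uel a) * P = 0 := by
        rw [← Ring.lie_def]; exact h1
      have h5 : d • (P * Uel a - Uel a * P) = 0 := by
        rw [smul_sub]
        rw [← mul_smul_comm, ← smul_mul_assoc]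
        exact h4
      have h6 : P * Uel a - Uel a * P = 0 := by
        ext m'
        have h7 : (d • (P * Uel a - Uel a * P)) m' = 0 := by rw [h5]; rfl
        rw [MonoidAlgebra.coeff_smul_apply, smul_eq_mul] at h7
        rcases mul_eq_zero.1 h7 with h8 | h8
        · exact absurd h8 hd
        · simpa using h8
      have := sub_eq_zero.1 h6
      exact this.symm
    have hex : ∃ i, a i ≠ 0 := by
      by_contra hno
      push_neg at hno
      have hz : Finset.univ.gcd a = 0 := Finset.gcd_eq_zero_iff.2 (fun i _ => hno i)
      rw [hgcd] at hz
      exact one_ne_zero hz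
    obtain ⟨f, hf⟩ := bezout_finset (Finset.univ : Finset (Fin n)) a
    rw [hgcd] at hf
    set m := ∑ i, f i * P (FreeMonoid.ofList [i]) with hm
    have hba : ∀ i j : Fin n,
        a i * P (FreeMonoid.ofList [j]) = a j * P (FreeMonoid.ofList [i]) := by
      intro i j
      have hr := Rrel a h3 i [j] (by simp)
      simpa using hr
    have hbm : ∀ j, P (FreeMonoid.ofList [j]) = m * a j := by
      intro j
      calc P (FreeMonoid.ofList [j]) = 1 * P (FreeMonoid.ofList [j]) := (one_mul _).symm
        _ = (∑ i, f i * a i) * P (FreeMonoid.ofList [j]) := by rw [hf]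
        _ = ∑ i, f i * (a i * P (FreeMonoid.ofList [j])) := by
            rw [Finset.sum_mul]
            refine Finset.sum_congr rfl ?_
            intro i _
            ring
        _ = ∑ i, f i * (a j * P (FreeMonoid.ofList [i])) := by
            refine Finset.sum_congr rfl ?_
            intro i _
            rw [hba i j]
        _ = m * a j := by
            rw [hm, Finset.sum_mul]
            refine Finset.sum_congr rfl ?_
            intro i _
            ring
    have hPk : ∀ w₀ : List (Fin n), w₀.length ≠ 1 → P (FreeMonoid.ofList w₀) = 0 :=
      fun w₀ hk => Pk_zero h3 (Lam_psi_mem a y) hex w₀ hk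
    have hPeq : P = m • Uel a := by
      ext m'
      rw [MonoidAlgebra.coeff_smul_apply]
      have hm' : m' = FreeMonoid.ofList (FreeMonoid.toList m') :=
        (FreeMonoid.ofList_toList m').symm
      by_cases hlen : (FreeMonoid.toList m').length = 1
      · obtain ⟨j, hj⟩ := List.length_eq_one_iff.1 hlen
        rw [hm', hj, hbm j, Uel_apply_single j, smul_eq_mul]
      · rw [hm', hPk _ hlen, ← hm', Uel_apply_ne m' hlen, smul_zero]
    refine ⟨m, ?_⟩
    have hsub : psi (y - m • x₀) = 0 := by
      rw [map_sub, map_smul, hU, ← hP, hPeq, sub_self]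
    have h9 := psi_injective _ hsub
    have := sub_eq_zero.1 h9
    exact this
  · rintro ⟨m, rfl⟩
    rw [smul_lie, lie_smul, lie_self]
    simp

end mainproof

end FLR

/-- Lemma 3.6. In the free Lie ring `𝔏_n` on `X_1, …, X_n` (the free Lie
algebra over `ℤ` on `Fin n`), let `a_1, …, a_n` be integers with gcd `1`, `d ≠ 0` an integer,
and `X = d • (∑ a_i X_i)`.  Then the centralizer of `X` is exactly the set of integer
multiples of `∑ a_i X_i`. -/
theorem centralizer_in_free_lie_ring (n : ℕ) (hn : 1 ≤ n) (a : Fin n → ℤ)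
    (hgcd : Finset.univ.gcd a = 1) (d : ℤ) (hd : d ≠ 0)
    (y : FreeLieAlgebra ℤ (Fin n)) :
    ⁅y, d • ∑ i : Fin n, a i • FreeLieAlgebra.of ℤ i⁆ = 0 ↔
      ∃ m : ℤ, y = m • ∑ i : Fin n, a i • FreeLieAlgebra.of ℤ i :=
  FLR.main_statement (a := a) hn hgcd d hd y
end

section
/- Let G be a group, G_* a strongly central filtration on G (subgroups G = G_1 ⊇ G_2 ⊇ ⋯ with [G_i, G_j] ⊆ G_{i+j}), and let H, K be subgroups of G such that K normalizes H. Then the following are equivalent: (i) for every i ≥ 1, every element g ∈ G_i which can be written as a product of an element of H and an element of K can be written as g = h·k with h ∈ G_i ∩ H and k ∈ G_i ∩ K; (ii) for every i ≥ 1, every h ∈ G_i ∩ H and every k ∈ G_i ∩ K with h⁻¹k ∈ G_{i+1}, there exists z ∈ G_i ∩ H ∩ K with h⁻¹z ∈ G_{i+1}. -/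
open scoped commutatorElement

/-- Proposition 4.2. Let `Gf` be a strongly central filtration on `G` and
`H, K ≤ G` with `K` normalizing `H`.  Then `G_* ∩ (HK) = (G_* ∩ H)(G_* ∩ K)` (condition (i))
if and only if, inside the associated graded Lie ring,
`Lie(G_* ∩ H) ∩ Lie(G_* ∩ K) = Lie(G_* ∩ (H ∩ K))` (condition (ii)). -/
theorem decomposition_of_induced_filtration {G : Type*} [Group G] (Gf : ℕ → Subgroup G)
    (h1 : Gf 1 = ⊤)
    (hdesc : ∀ i, 1 ≤ i → Gf (i + 1) ≤ Gf i)
    (hsc : ∀ i j, 1 ≤ i → 1 ≤ j → ∀ g ∈ Gf i, ∀ x ∈ Gf j, ⁅g, x⁆ ∈ Gf (i + j))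
    (H K : Subgroup G) (hnorm : ∀ k ∈ K, ∀ h ∈ H, k * h * k⁻¹ ∈ H) :
    (∀ i, 1 ≤ i → ∀ g ∈ Gf i, (∃ h ∈ H, ∃ k ∈ K, g = h * k) →
        ∃ h ∈ Gf i ⊓ H, ∃ k ∈ Gf i ⊓ K, g = h * k) ↔
      (∀ i, 1 ≤ i → ∀ h ∈ Gf i ⊓ H, ∀ k ∈ Gf i ⊓ K, h⁻¹ * k ∈ Gf (i + 1) →
        ∃ z ∈ Gf i ⊓ H ⊓ K, h⁻¹ * z ∈ Gf (i + 1)) := by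
  constructor
  · intro hi i hi1 h hh k hk hhk
    obtain ⟨h', hh', k', hk', heq⟩ :=
      hi (i + 1) (by omega) (h⁻¹ * k) hhk ⟨h⁻¹, H.inv_mem hh.2, k, hk.2, rfl⟩
    have hzK : h * h' ∈ K := by
      have : h * h' = k * k'⁻¹ := by
        apply mul_right_cancel (b := k')
        rw [mul_assoc, ← heq]
        group
      rw [this]
      exact mul_mem hk.2 (K.inv_mem hk'.2)
    refine ⟨h * h', ⟨⟨mul_mem hh.1 (hdesc i hi1 hh'.1), mul_mem hh.2 hh'.2⟩, hzK⟩, ?_⟩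
    simpa using hh'.1
  · intro hii i hi1
    induction i, hi1 using Nat.le_induction with
    | base =>
      rintro g hg ⟨h, hh, k, hk, heq⟩
      exact ⟨h, ⟨by simp [h1], hh⟩, k, ⟨by simp [h1], hk⟩, heq⟩
    | succ i hi IH =>
      intro g hg hex
      obtain ⟨h, hh, k, hk, heq⟩ := IH g (hdesc i hi hg) hex
      have hg' : (h⁻¹)⁻¹ * k ∈ Gf (i + 1) := by
        rw [inv_inv, ← heq]; exact hg
      obtain ⟨z, hz, hz2⟩ :=
        hii i hi h⁻¹ ⟨(Gf i).inv_mem hh.1, H.inv_mem hh.2⟩ k hk hg'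
      rw [inv_inv] at hz2
      refine ⟨h * z, ⟨hz2, mul_mem hh.2 hz.1.2⟩, z⁻¹ * k, ⟨?_, mul_mem (K.inv_mem hz.2) hk.2⟩, ?_⟩
      · have : z⁻¹ * k = (h * z)⁻¹ * g := by rw [heq]; group
        rw [this]
        exact mul_mem ((Gf (i + 1)).inv_mem hz2) hg
      · rw [heq]; group
end

section
/- Let G be a group, G_* a strongly central filtration on G (subgroups G = G_1 ⊇ G_2 ⊇ ⋯ with [G_i, G_j] ⊆ G_{i+j}), and let H, K be subgroups of G with [K,H] ⊆ [H,H] (commutator subgroups). Suppose: (a) for every i ≥ 1, every h ∈ G_i ∩ H and every k ∈ G_i ∩ K with h⁻¹k ∈ G_{i+1}, there exists z ∈ G_i ∩ H ∩ K with h⁻¹z ∈ G_{i+1}; (b) for every i ≥ 1, G_i ∩ K = Γ_i(K) and G_i ∩ H = Γ_i(H), where Γ_i of a subgroup is its lower central series viewed inside G. Then for every i ≥ 1, G_i ∩ (HK) = Γ_i(HK), the i-th lower central series term of the subgroup HK = H∨K. -/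
/-- The relative lower central series of `B` under `A`, computed inside `G`:
`relLCS A B 0 = B` and `relLCS A B (k+1) = ⁅A, relLCS A B k⁆`.  In particular
`relLCS S S (i-1)` is the `i`-th term `Γ_i(S)` of the lower central series of a subgroup
`S`, computed inside `G`. -/
def relLCS {G : Type*} [Group G] (A B : Subgroup G) : ℕ → Subgroup G
  | 0 => B
  | k + 1 => ⁅A, relLCS A B k⁆

open scoped commutatorElement

lemma relLCS_mono {G : Type*} [Group G] {A A' B B' : Subgroup G}
    (hA : A ≤ A') (hB : B ≤ B') : ∀ n, relLCS A B n ≤ relLCS A' B' n := by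
  intro n
  induction n with
  | zero => exact hB
  | succ k ih => exact Subgroup.commutator_mono hA ih

lemma relLCS_le_base {G : Type*} [Group G] {A B : Subgroup G}
    (hBA : B ≤ A) : ∀ n, relLCS A B n ≤ A := by
  intro n
  induction n with
  | zero => exact hBA
  | succ k ih =>
    rw [show relLCS A B (k+1) = ⁅A, relLCS A B k⁆ from rfl, Subgroup.commutator_le]
    intro g hg x hx
    have hx' : x ∈ A := ih hx
    rw [commutatorElement_def]
    exact A.mul_mem (A.mul_mem (A.mul_mem hg hx') (A.inv_mem hg)) (A.inv_mem hx')

/-- Theorem 4.3, the key theorem. Let `Gf` be a strongly central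
filtration on `G`, and `H, K ≤ G` with `[K,H] ⊆ [H,H]`.  Assume
(a) `Lie(G_* ∩ H) ∩ Lie(G_* ∩ K) = Lie(G_* ∩ (H ∩ K))`, and
(b) `G_i ∩ K = Γ_i(K)` and `G_i ∩ H = Γ_i(H)` for all `i ≥ 1`.
Then `G_i ∩ (HK) = Γ_i(HK)` for all `i ≥ 1` (here `HK = H ⊔ K`, and `Γ_i(S)` is
`relLCS S S (i-1)`). -/
theorem key_theorem_products {G : Type*} [Group G] (Gf : ℕ → Subgroup G)
    (h1 : Gf 1 = ⊤)
    (hdesc : ∀ i, 1 ≤ i → Gf (i + 1) ≤ Gf i)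
    (hsc : ∀ i j, 1 ≤ i → 1 ≤ j → ∀ g ∈ Gf i, ∀ x ∈ Gf j, ⁅g, x⁆ ∈ Gf (i + j))
    (H K : Subgroup G) (hKH : ⁅K, H⁆ ≤ ⁅H, H⁆)
    (ha : ∀ i, 1 ≤ i → ∀ h ∈ Gf i ⊓ H, ∀ k ∈ Gf i ⊓ K, h⁻¹ * k ∈ Gf (i + 1) →
      ∃ z ∈ Gf i ⊓ H ⊓ K, h⁻¹ * z ∈ Gf (i + 1))
    (hbK : ∀ i : ℕ, Gf (i + 1) ⊓ K = relLCS K K i)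
    (hbH : ∀ i : ℕ, Gf (i + 1) ⊓ H = relLCS H H i) :
    ∀ i : ℕ, Gf (i + 1) ⊓ (H ⊔ K) = relLCS (H ⊔ K) (H ⊔ K) i := by
  -- the filtration is descending on indices ≥ 1
  have hanti : ∀ i j : ℕ, 1 ≤ i → i ≤ j → Gf j ≤ Gf i := by
    intro i j hi hij
    induction j, hij using Nat.le_induction with
    | base => exact le_rfl
    | succ n hn ih => exact (hdesc n (le_trans hi hn)).trans ih
  -- [H, H] ≤ H, hence [K, H] ≤ H
  have hHH : ⁅H, H⁆ ≤ H := by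
    rw [Subgroup.commutator_le]
    intro g hg x hx
    rw [commutatorElement_def]
    exact H.mul_mem (H.mul_mem (H.mul_mem hg hx) (H.inv_mem hg)) (H.inv_mem hx)
  have hKH' : ⁅K, H⁆ ≤ H := hKH.trans hHH
  -- K normalizes H
  have hnorm : ∀ k ∈ K, ∀ h ∈ H, k * h * k⁻¹ ∈ H := by
    intro k hk h hh
    have hc : ⁅k, h⁆ ∈ H := hKH' (Subgroup.commutator_mem_commutator hk hh)
    have : k * h * k⁻¹ = ⁅k, h⁆ * h := by group
    rw [this]
    exact H.mul_mem hc hh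
  -- every element of H ⊔ K decomposes as h * k
  have hdecomp : ∀ x ∈ H ⊔ K, ∃ h ∈ H, ∃ k ∈ K, x = h * k := by
    let S : Subgroup G :=
      { carrier := {x | ∃ h ∈ H, ∃ k ∈ K, x = h * k}
        one_mem' := ⟨1, H.one_mem, 1, K.one_mem, (one_mul 1).symm⟩
        mul_mem' := by
          rintro a b ⟨h₁, hh₁, k₁, hk₁, rfl⟩ ⟨h₂, hh₂, k₂, hk₂, rfl⟩
          refine ⟨h₁ * (k₁ * h₂ * k₁⁻¹), H.mul_mem hh₁ (hnorm _ hk₁ _ hh₂),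
            k₁ * k₂, K.mul_mem hk₁ hk₂, by group⟩
        inv_mem' := by
          rintro a ⟨h, hh, k, hk, rfl⟩
          refine ⟨k⁻¹ * h⁻¹ * k⁻¹⁻¹, hnorm _ (K.inv_mem hk) _ (H.inv_mem hh),
            k⁻¹, K.inv_mem hk, by group⟩ }
    have hle : H ⊔ K ≤ S := by
      refine sup_le (fun h hh => ⟨h, hh, 1, K.one_mem, (mul_one h).symm⟩)
        (fun k hk => ⟨1, H.one_mem, k, hk, (one_mul k).symm⟩)
    intro x hx
    exact hle hx
  -- key descent: improve a decomposition level by level using (a)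
  have key : ∀ n : ℕ, ∀ x ∈ Gf (n + 1), ∀ j, 1 ≤ j → j ≤ n + 1 →
      (∃ h ∈ H, ∃ k ∈ K, x = h * k) →
      ∃ h ∈ Gf j ⊓ H, ∃ k ∈ Gf j ⊓ K, x = h * k := by
    intro n x hx j hj
    induction j, hj using Nat.le_induction with
    | base =>
      rintro _ ⟨h, hh, k, hk, rfl⟩
      exact ⟨h, ⟨by rw [h1]; trivial, hh⟩, k, ⟨by rw [h1]; trivial, hk⟩, rfl⟩
    | succ j hj ih =>
      intro hjn hdec
      obtain ⟨h, ⟨hg, hH⟩, k, ⟨kg, kK⟩, rfl⟩ := ih (by omega) hdec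
      have hxj : h * k ∈ Gf (j + 1) := hanti (j + 1) (n + 1) (by omega) hjn hx
      have hinv : (h⁻¹)⁻¹ * k ∈ Gf (j + 1) := by rw [inv_inv]; exact hxj
      obtain ⟨z, ⟨⟨zg, zH⟩, zK⟩, hz⟩ :=
        ha j hj h⁻¹ ⟨(Gf j).inv_mem hg, H.inv_mem hH⟩ k ⟨kg, kK⟩ hinv
      rw [inv_inv] at hz
      refine ⟨h * z, ⟨hz, H.mul_mem hH zH⟩,
        z⁻¹ * k, ⟨?_, K.mul_mem (K.inv_mem zK) kK⟩, by group⟩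
      have : z⁻¹ * k = (h * z)⁻¹ * (h * k) := by group
      rw [this]
      exact (Gf (j + 1)).mul_mem ((Gf (j + 1)).inv_mem hz) hxj
  -- easy direction: Γ_{i+1}(H ⊔ K) ≤ Gf (i+1)
  have hup : ∀ n : ℕ, relLCS (H ⊔ K) (H ⊔ K) n ≤ Gf (n + 1) := by
    intro n
    induction n with
    | zero => rw [h1]; exact le_top
    | succ m ih =>
      rw [show relLCS (H ⊔ K) (H ⊔ K) (m+1) = ⁅H ⊔ K, relLCS (H ⊔ K) (H ⊔ K) m⁆ from rfl,
        Subgroup.commutator_le]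
      intro g _ x hx
      have hg1 : g ∈ Gf 1 := by rw [h1]; trivial
      have := hsc 1 (m + 1) le_rfl (by omega) g hg1 x (ih hx)
      rwa [show 1 + (m + 1) = m + 1 + 1 by omega] at this
  intro i
  apply le_antisymm
  · rintro x ⟨hx, hxHK⟩
    obtain ⟨h, hh, k, hk, rfl⟩ :=
      key i x hx (i + 1) (by omega) le_rfl (hdecomp x hxHK)
    have hh' : h ∈ relLCS H H i := by rw [← hbH]; exact hh
    have hk' : k ∈ relLCS K K i := by rw [← hbK]; exact hk
    exact (relLCS (H ⊔ K) (H ⊔ K) i).mul_mem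
      (relLCS_mono le_sup_left le_sup_left i hh')
      (relLCS_mono le_sup_right le_sup_right i hk')
  · exact le_inf (hup i) (relLCS_le_base le_rfl i)
end
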